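/- arXiv:2405.10773 — 3 statements merged into one kernel-verified Lean document; each statement's English description precedes it below -/
import Mathlib

section
/- Under consistency (Y(a)=Y when A=a for a∈{0,1}), randomization ((Y(1),Y(0),U) ⟂ A | (X,S=1)), CATE transportability (E[Y(1)−Y(0)|X,U,S=0] = E[Y(1)−Y(0)|X,U,S=1] a.s.-P(X,U|S=0)), and positivity (P(S=1|X,U)·e(a|X) > 0 where e(a|X)=P(A=a|X,S=1)), the target parameter ψ = E[Y(1)−Y(0)|S=0] satisfies ψ = E[ E[ (2A−1)Y/e(A|X) | X,U,S=1 ] | S=0 ] = (1/α)·E[ S·(P(S=0|X,U)/P(S=1|X,U))·(2A−1)Y/e(A|X) ], where α = P(S=0). -/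
open MeasureTheory ProbabilityTheory Set
open scoped NNReal ENNReal

noncomputable section


section AuxLemmas

variable {Ω : Type*} {m m0 : MeasurableSpace Ω}

lemma aux_abs_indicator_le_one {β : Type*} (s : Set β) (b : β) :
    |s.indicator (fun _ => (1 : ℝ)) b| ≤ 1 := by
  classical
  by_cases h : b ∈ s <;> simp [Set.indicator_apply, h]

lemma aux_max_sub_max (x : ℝ) : max x 0 - max (-x) 0 = x := by
  rcases le_total 0 x with h | h
  · rw [max_eq_left h, max_eq_right (neg_nonpos.mpr h)]; ring
  · rw [max_eq_right h, max_eq_left (neg_nonneg.mpr h)]; ring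

lemma aux_integrable_of_bdd {μ : Measure Ω} [IsFiniteMeasure μ] {f : Ω → ℝ}
    (hf : AEStronglyMeasurable f μ) {C : ℝ} (hC : ∀ ω, |f ω| ≤ C) : Integrable f μ :=
  Integrable.mono' (integrable_const C) hf (Filter.Eventually.of_forall fun ω => by
    rw [Real.norm_eq_abs]; exact hC ω)

lemma aux_pullout {μ : Measure Ω} (hm : m ≤ m0) [IsFiniteMeasure μ] {b Z : Ω → ℝ}
    (hb : StronglyMeasurable[m] b) (hbZ : Integrable (fun ω => b ω * Z ω) μ)
    (hZ : Integrable Z μ) :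
    ∫ ω, b ω * Z ω ∂μ = ∫ ω, b ω * (condExp m μ Z ω) ∂μ := by
  have h := condExp_mul_of_stronglyMeasurable_left hb (show Integrable (b * Z) μ from hbZ) hZ
  calc ∫ ω, b ω * Z ω ∂μ = ∫ ω, condExp m μ (b * Z) ω ∂μ := (integral_condExp hm).symm
    _ = ∫ ω, b ω * condExp m μ Z ω ∂μ := integral_congr_ae h

lemma aux_cond_restrict_eq {μ : Measure Ω} {s : Set Ω} (h0 : μ s ≠ 0) (ht : μ s ≠ ⊤) :
    μ.restrict s = μ s • μ[|s] := by
  show μ.restrict s = μ s • ((μ s)⁻¹ • μ.restrict s)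
  rw [smul_smul, ENNReal.mul_inv_cancel h0 ht, one_smul]

lemma aux_integrable_cond {μ : Measure Ω} {s : Set Ω} (h0 : μ s ≠ 0) {f : Ω → ℝ}
    (hf : Integrable f μ) : Integrable f (μ[|s]) := by
  show Integrable f ((μ s)⁻¹ • μ.restrict s)
  exact (hf.restrict).smul_measure (by simp [h0])

lemma aux_integrable_of_cond {μ : Measure Ω} {s : Set Ω} (h0 : μ s ≠ 0) (ht : μ s ≠ ⊤)
    {f : Ω → ℝ} (hf : Integrable f (μ[|s])) : Integrable f (μ.restrict s) := by
  rw [aux_cond_restrict_eq h0 ht]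
  exact hf.smul_measure ht

lemma aux_cond_integral {μ : Measure Ω} {s : Set Ω} (h0 : μ s ≠ 0) (ht : μ s ≠ ⊤)
    (f : Ω → ℝ) : ∫ ω in s, f ω ∂μ = (μ s).toReal * ∫ ω, f ω ∂(μ[|s]) := by
  show _ = (μ s).toReal * ∫ ω, f ω ∂((μ s)⁻¹ • μ.restrict s)
  rw [integral_smul_measure, ENNReal.toReal_inv, smul_eq_mul, ← mul_assoc,
    mul_inv_cancel₀ (by simp [ENNReal.toReal_ne_zero, h0, ht]), one_mul]

end AuxLemmas
/-- From vanishing of `∫ 1_{B1}(X) 1_{B2}(V) w` on all rectangles, conclude vanishing of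
`∫ H(X,V) w` for all measurable `H` with integrable integrand. -/
lemma aux_Gsum {Ω 𝓧 V : Type*} [MeasurableSpace Ω] [MeasurableSpace 𝓧] [MeasurableSpace V]
    (μ1 : Measure Ω) [IsProbabilityMeasure μ1]
    (X : Ω → 𝓧) (Vf : Ω → V) (w : Ω → ℝ)
    (hX : Measurable X) (hV : Measurable Vf) (hw : Measurable w) (hwb : ∀ ω, |w ω| ≤ 1)
    (hbase : ∀ B1 : Set 𝓧, MeasurableSet B1 → ∀ B2 : Set V, MeasurableSet B2 →
      ∫ ω, (B1.indicator (fun _ => (1:ℝ)) (X ω) * B2.indicator (fun _ => (1:ℝ)) (Vf ω)) * w ω ∂μ1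
        = 0)
    (H : 𝓧 × V → ℝ) (hH : Measurable H)
    (hint : Integrable (fun ω => H (X ω, Vf ω) * w ω) μ1) :
    ∫ ω, H (X ω, Vf ω) * w ω ∂μ1 = 0 := by
  classical
  set P : Ω → 𝓧 × V := fun ω => (X ω, Vf ω) with hPdef
  have hPm : Measurable P := hX.prodMk hV
  set wp : Ω → ℝ≥0 := fun ω => Real.toNNReal (w ω) with hwpdef
  set wm : Ω → ℝ≥0 := fun ω => Real.toNNReal (-(w ω)) with hwmdef
  have hwpm : Measurable wp := measurable_real_toNNReal.comp hw
  have hwmm : Measurable wm := measurable_real_toNNReal.comp hw.neg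
  have hwp_coe : ∀ ω, ((wp ω : ℝ)) = max (w ω) 0 := fun ω => Real.coe_toNNReal' _
  have hwm_coe : ∀ ω, ((wm ω : ℝ)) = max (-(w ω)) 0 := fun ω => Real.coe_toNNReal' _
  have hwp_abs : ∀ ω, |(wp ω : ℝ)| ≤ 1 := fun ω => by
    rw [hwp_coe, abs_of_nonneg (le_max_right _ _)]
    exact max_le (le_trans (le_abs_self _) (hwb ω)) zero_le_one
  have hwm_abs : ∀ ω, |(wm ω : ℝ)| ≤ 1 := fun ω => by
    rw [hwm_coe, abs_of_nonneg (le_max_right _ _)]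
    exact max_le (le_trans (le_abs_self _) (abs_neg (w ω) ▸ hwb ω)) zero_le_one
  set ρp : Measure Ω := μ1.withDensity (fun ω => ((wp ω : ℝ≥0∞))) with hρpdef
  set ρm : Measure Ω := μ1.withDensity (fun ω => ((wm ω : ℝ≥0∞))) with hρmdef
  have hfinp : IsFiniteMeasure ρp := by
    refine isFiniteMeasure_withDensity (ne_of_lt ?_)
    calc ∫⁻ ω, ((wp ω : ℝ≥0∞)) ∂μ1 ≤ ∫⁻ _, 1 ∂μ1 := by
          refine lintegral_mono fun ω => ?_
          rw [show (1 : ℝ≥0∞) = ((1 : ℝ≥0) : ℝ≥0∞) by simp]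
          exact ENNReal.coe_le_coe.mpr (by
            have := hwp_abs ω
            rw [abs_of_nonneg (by positivity)] at this
            exact_mod_cast this)
      _ = 1 := by simp
      _ < ⊤ := by simp
  have hfinm : IsFiniteMeasure ρm := by
    refine isFiniteMeasure_withDensity (ne_of_lt ?_)
    calc ∫⁻ ω, ((wm ω : ℝ≥0∞)) ∂μ1 ≤ ∫⁻ _, 1 ∂μ1 := by
          refine lintegral_mono fun ω => ?_
          rw [show (1 : ℝ≥0∞) = ((1 : ℝ≥0) : ℝ≥0∞) by simp]
          exact ENNReal.coe_le_coe.mpr (by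
            have := hwm_abs ω
            rw [abs_of_nonneg (by positivity)] at this
            exact_mod_cast this)
      _ = 1 := by simp
      _ < ⊤ := by simp
  -- value of the densities on measurable sets, in real terms
  have hvalp : ∀ T : Set Ω, MeasurableSet T →
      ρp T = ENNReal.ofReal (∫ ω in T, ((wp ω : ℝ)) ∂μ1) := by
    intro T hT
    rw [hρpdef, withDensity_apply _ hT,
      ofReal_integral_eq_lintegral_ofReal
        (aux_integrable_of_bdd (hwpm.coe_nnreal_real.aestronglyMeasurable) hwp_abs)
        (Filter.Eventually.of_forall fun ω => by positivity)]
    simp [ENNReal.ofReal_coe_nnreal]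
  have hvalm : ∀ T : Set Ω, MeasurableSet T →
      ρm T = ENNReal.ofReal (∫ ω in T, ((wm ω : ℝ)) ∂μ1) := by
    intro T hT
    rw [hρmdef, withDensity_apply _ hT,
      ofReal_integral_eq_lintegral_ofReal
        (aux_integrable_of_bdd (hwmm.coe_nnreal_real.aestronglyMeasurable) hwm_abs)
        (Filter.Eventually.of_forall fun ω => by positivity)]
    simp [ENNReal.ofReal_coe_nnreal]
  -- set integrals of wp and wm agree on preimages of rectangles
  have hsetint : ∀ (T : Set Ω), MeasurableSet T →
      (∫ ω, T.indicator (fun _ => (1:ℝ)) ω * w ω ∂μ1 = 0) →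
      ∫ ω in T, ((wp ω : ℝ)) ∂μ1 = ∫ ω in T, ((wm ω : ℝ)) ∂μ1 := by
    intro T hT h0
    have hip : IntegrableOn (fun ω => ((wp ω : ℝ))) T μ1 :=
      (aux_integrable_of_bdd (hwpm.coe_nnreal_real.aestronglyMeasurable) hwp_abs).integrableOn
    have him : IntegrableOn (fun ω => ((wm ω : ℝ))) T μ1 :=
      (aux_integrable_of_bdd (hwmm.coe_nnreal_real.aestronglyMeasurable) hwm_abs).integrableOn
    have hsub : ∫ ω in T, (((wp ω : ℝ)) - ((wm ω : ℝ))) ∂μ1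
        = ∫ ω in T, ((wp ω : ℝ)) ∂μ1 - ∫ ω in T, ((wm ω : ℝ)) ∂μ1 := integral_sub hip him
    have hptw : ∀ ω, ((wp ω : ℝ)) - ((wm ω : ℝ)) = w ω := fun ω => by
      rw [hwp_coe, hwm_coe]; exact aux_max_sub_max _
    have : ∫ ω in T, (((wp ω : ℝ)) - ((wm ω : ℝ))) ∂μ1 = ∫ ω in T, w ω ∂μ1 := by
      refine integral_congr_ae (Filter.Eventually.of_forall fun ω => hptw ω)
    have hTw : ∫ ω in T, w ω ∂μ1 = 0 := by
      rw [← integral_indicator hT] at *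
      rw [← h0]
      refine integral_congr_ae (Filter.Eventually.of_forall fun ω => ?_)
      by_cases hω : ω ∈ T <;> simp [Set.indicator_apply, hω]
    have := hsub.symm.trans (this.trans hTw)
    linarith
  -- the two pushforward measures agree
  have hmeq : Measure.map P ρp = Measure.map P ρm := by
    haveI := hfinp
    haveI := hfinm
    haveI : IsFiniteMeasure (Measure.map P ρp) := by
      constructor
      rw [Measure.map_apply hPm MeasurableSet.univ]
      exact measure_lt_top _ _
    refine MeasureTheory.ext_of_generate_finite _ generateFrom_prod.symm isPiSystem_prod ?_ ?_
    · rintro t ⟨B1, hB1, B2, hB2, rfl⟩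
      have hB1' : MeasurableSet B1 := hB1
      have hB2' : MeasurableSet B2 := hB2
      have hT : MeasurableSet (P ⁻¹' (B1 ×ˢ B2)) := hPm (hB1'.prod hB2')
      rw [Measure.map_apply hPm (hB1'.prod hB2'), Measure.map_apply hPm (hB1'.prod hB2'),
        hvalp _ hT, hvalm _ hT]
      congr 1
      refine hsetint _ hT ?_
      have := hbase B1 hB1' B2 hB2'
      rw [← this]
      refine integral_congr_ae (Filter.Eventually.of_forall fun ω => ?_)
      -- (measures already in ofReal form)
      by_cases h1 : X ω ∈ B1 <;> by_cases h2 : Vf ω ∈ B2 <;>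
        simp [Set.indicator_apply, h1, h2, hPdef, Set.mem_prod]
    · have hT : MeasurableSet (P ⁻¹' (univ : Set (𝓧 × V))) := hPm MeasurableSet.univ
      rw [Measure.map_apply hPm MeasurableSet.univ, Measure.map_apply hPm MeasurableSet.univ,
        hvalp _ hT, hvalm _ hT]
      congr 1
      refine hsetint _ hT ?_
      have := hbase univ MeasurableSet.univ univ MeasurableSet.univ
      rw [← this]
      refine integral_congr_ae (Filter.Eventually.of_forall fun ω => ?_)
      simp [Set.indicator_apply]
  -- integrability of the positive/negative pieces
  have hHmeas : AEStronglyMeasurable (fun ω => H (X ω, Vf ω) * w ω) μ1 :=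
    ((hH.comp hPm).mul hw).aestronglyMeasurable
  have hHp_int : Integrable (fun ω => H (P ω) * ((wp ω : ℝ))) μ1 := by
    refine hint.mono ((hH.comp hPm).mul hwpm.coe_nnreal_real).aestronglyMeasurable
      (Filter.Eventually.of_forall fun ω => ?_)
    rw [Real.norm_eq_abs, Real.norm_eq_abs, abs_mul, abs_mul]
    refine mul_le_mul_of_nonneg_left ?_ (abs_nonneg _)
    rw [hwp_coe, abs_of_nonneg (le_max_right _ _)]
    exact max_le (le_abs_self _) (abs_nonneg _)
  have hHm_int : Integrable (fun ω => H (P ω) * ((wm ω : ℝ))) μ1 := by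
    refine hint.mono ((hH.comp hPm).mul hwmm.coe_nnreal_real).aestronglyMeasurable
      (Filter.Eventually.of_forall fun ω => ?_)
    rw [Real.norm_eq_abs, Real.norm_eq_abs, abs_mul, abs_mul]
    refine mul_le_mul_of_nonneg_left ?_ (abs_nonneg _)
    rw [hwm_coe, abs_of_nonneg (le_max_right _ _)]
    exact max_le ((abs_neg (w ω)) ▸ le_abs_self _) (abs_nonneg _)
  have ep : ∫ ω, H (P ω) * ((wp ω : ℝ)) ∂μ1 = ∫ p, H p ∂(Measure.map P ρp) := by
    rw [integral_map hPm.aemeasurable hH.aestronglyMeasurable, hρpdef,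
      integral_withDensity_eq_integral_smul hwpm]
    refine integral_congr_ae (Filter.Eventually.of_forall fun ω => ?_)
    simp only [NNReal.smul_def, smul_eq_mul]; ring
  have em : ∫ ω, H (P ω) * ((wm ω : ℝ)) ∂μ1 = ∫ p, H p ∂(Measure.map P ρm) := by
    rw [integral_map hPm.aemeasurable hH.aestronglyMeasurable, hρmdef,
      integral_withDensity_eq_integral_smul hwmm]
    refine integral_congr_ae (Filter.Eventually.of_forall fun ω => ?_)
    simp only [NNReal.smul_def, smul_eq_mul]; ring
  have hsplit : ∫ ω, H (X ω, Vf ω) * w ω ∂μ1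
      = ∫ ω, H (P ω) * ((wp ω : ℝ)) ∂μ1 - ∫ ω, H (P ω) * ((wm ω : ℝ)) ∂μ1 := by
    rw [← integral_sub hHp_int hHm_int]
    refine integral_congr_ae (Filter.Eventually.of_forall fun ω => ?_)
    have : ((wp ω : ℝ)) - ((wm ω : ℝ)) = w ω := by
      rw [hwp_coe, hwm_coe]; exact aux_max_sub_max _
    calc H (X ω, Vf ω) * w ω = H (P ω) * (((wp ω : ℝ)) - ((wm ω : ℝ))) := by rw [this]
      _ = H (P ω) * ((wp ω : ℝ)) - H (P ω) * ((wm ω : ℝ)) := by ring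
  rw [hsplit, ep, em, hmeq, sub_self]

/-- Conditional independence of `f` and `g` given `σ(c)` under `μ`, expressed through
factorization of conditional expectations of bounded measurable test functions. -/
def CondIndepFunAE {Ω β γ δ : Type*} [MeasurableSpace Ω] [MeasurableSpace β]
    [MeasurableSpace γ] [MeasurableSpace δ]
    (c : Ω → δ) (f : Ω → β) (g : Ω → γ) (μ : Measure Ω) : Prop :=
  ∀ (φ : β → ℝ) (ψ : γ → ℝ), Measurable φ → Measurable ψ →
    (∀ b, |φ b| ≤ 1) → (∀ c', |ψ c'| ≤ 1) →
    condExp (MeasurableSpace.comap c inferInstance) μ (fun ω => φ (f ω) * ψ (g ω)) =ᵐ[μ]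
      fun ω => (condExp (MeasurableSpace.comap c inferInstance) μ (fun ω' => φ (f ω')) ω) *
        (condExp (MeasurableSpace.comap c inferInstance) μ (fun ω' => ψ (g ω')) ω)

theorem stmt1_aux {Ω 𝓧 𝓤 : Type*} (m mX : MeasurableSpace Ω) [MeasurableSpace Ω] [MeasurableSpace 𝓧] [MeasurableSpace 𝓤]
    (μ : Measure Ω) [IsProbabilityMeasure μ]
    
    (X : Ω → 𝓧) (U : Ω → 𝓤) (hX : Measurable X) (hU : Measurable U)
    (hmeq : m = MeasurableSpace.comap (fun ω => (X ω, U ω)) inferInstance)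
    (hmXeq : mX = MeasurableSpace.comap X inferInstance)
    (S A Y Y0 Y1 : Ω → ℝ) (hS : Measurable S) (hA : Measurable A)
    (hY : Measurable Y) (hY0 : Measurable Y0) (hY1 : Measurable Y1)
    (hSbin : ∀ ω, S ω = 0 ∨ S ω = 1) (hAbin : ∀ ω, A ω = 0 ∨ A ω = 1)
    (α : ℝ) (hα : α = (μ {ω | S ω = 0}).toReal) (hαpos : 0 < α) (hα1 : α < 1)
    -- the known propensity score `e(1|X) = P(A=1 | X, S=1)`, strictly between 0 and 1
    (e1 : 𝓧 → ℝ) (he1 : Measurable e1) (hepos : ∀ x, 0 < e1 x ∧ e1 x < 1)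
    (heA : (fun ω => e1 (X ω)) =ᵐ[μ[|{ω | S ω = 1}]]
      condExp (mX) (μ[|{ω | S ω = 1}])
        (Set.indicator {ω | A ω = 1} (fun _ => (1 : ℝ))))
    -- Assumption 1(i): consistency
    (hcons : ∀ ω, S ω = 1 → ((A ω = 1 → Y ω = Y1 ω) ∧ (A ω = 0 → Y ω = Y0 ω)))
    -- Assumption 1(ii): randomization `(Y(1), Y(0), U) ⟂ A | (X, S=1)`
    (hrand : ∀ (φ : ℝ × ℝ × 𝓤 → ℝ) (ψf : ℝ → ℝ), Measurable φ → Measurable ψf →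
      (∀ b, |φ b| ≤ 1) → (∀ c', |ψf c'| ≤ 1) →
      condExp mX (μ[|{ω | S ω = 1}]) (fun ω => φ (Y1 ω, Y0 ω, U ω) * ψf (A ω)) =ᵐ[μ[|{ω | S ω = 1}]]
        fun ω => (condExp mX (μ[|{ω | S ω = 1}]) (fun ω' => φ (Y1 ω', Y0 ω', U ω')) ω) *
          (condExp mX (μ[|{ω | S ω = 1}]) (fun ω' => ψf (A ω')) ω))
    -- Assumption 1(iii): CATE transportability given `(X, U)`
    (htrans : condExp (m)
          (μ[|{ω | S ω = 0}]) (fun ω => Y1 ω - Y0 ω)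
        =ᵐ[μ[|{ω | S ω = 0}]]
        condExp (m)
          (μ[|{ω | S ω = 1}]) (fun ω => Y1 ω - Y0 ω))
    -- versions of the conditional trial-participation probabilities `P(S=s | X, U)`
    (p0 p1 : Ω → ℝ)
    (hp0 : p0 =ᵐ[μ] condExp (m) μ
      (Set.indicator {ω | S ω = 0} (fun _ => (1 : ℝ))))
    (hp1 : p1 =ᵐ[μ] condExp (m) μ
      (Set.indicator {ω | S ω = 1} (fun _ => (1 : ℝ))))
    -- Assumption 1(iv): positivity
    (hpos : ∀ᵐ ω ∂(μ[|{ω | S ω = 0}]), 0 < p1 ω)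
    -- the transformed outcome `Ỹ = (2A−1)Y / e(A|X)`
    (Ytil : Ω → ℝ)
    (hYtil : ∀ ω, Ytil ω =
      (2 * A ω - 1) * Y ω / (if A ω = 1 then e1 (X ω) else 1 - e1 (X ω)))
    -- target parameter
    (ψ : ℝ) (hψ : ψ = ∫ ω, (Y1 ω - Y0 ω) ∂(μ[|{ω | S ω = 0}]))
    -- integrability
    (hi1 : Integrable (fun ω => Y1 ω - Y0 ω) (μ[|{ω | S ω = 0}]))
    (hi1' : Integrable (fun ω => Y1 ω - Y0 ω) (μ[|{ω | S ω = 1}]))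
    (hi2 : Integrable Ytil (μ[|{ω | S ω = 1}]))
    (hi3 : Integrable (fun ω => condExp m (μ[|{ω | S ω = 1}]) Ytil ω) (μ[|{ω | S ω = 0}]))
    (hi4 : Integrable (fun ω => (p0 ω / p1 ω) * Ytil ω) μ) :
    ψ = ∫ ω, condExp (m)
          (μ[|{ω | S ω = 1}]) Ytil ω ∂(μ[|{ω | S ω = 0}]) ∧
      ψ = (1 / α) * ∫ ω in {ω | S ω = 1}, (p0 ω / p1 ω) * Ytil ω ∂μ := by
  
  classical
  -- ## Setup
  set s1 : Set Ω := {ω | S ω = 1} with hs1def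
  set s0 : Set Ω := {ω | S ω = 0} with hs0def
  have hms1 : MeasurableSet s1 := hS (measurableSet_singleton 1)
  have hms0 : MeasurableSet s0 := hS (measurableSet_singleton 0)
  have hμs0top : μ s0 ≠ ⊤ := measure_ne_top μ s0
  have hμs1top : μ s1 ≠ ⊤ := measure_ne_top μ s1
  have hμs0ne : μ s0 ≠ 0 := by
    intro h
    rw [hα, h, ENNReal.toReal_zero] at hαpos
    exact lt_irrefl 0 hαpos
  have hs1compl : s1 = s0ᶜ := by
    ext ω
    simp only [hs1def, hs0def, mem_compl_iff, mem_setOf_eq]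
    constructor
    · intro h1 h0; rw [h0] at h1; norm_num at h1
    · intro h0; rcases hSbin ω with h | h
      · exact absurd h h0
      · exact h
  have hμs1val : (μ s1).toReal = 1 - α := by
    rw [hs1compl, measure_compl hms0 hμs0top, measure_univ,
      ENNReal.toReal_sub_of_le prob_le_one (by simp), ENNReal.toReal_one, hα]
  have hμs1ne : μ s1 ≠ 0 := by
    intro h
    rw [h, ENNReal.toReal_zero] at hμs1val
    linarith
  haveI hPμ1 : IsProbabilityMeasure (μ[|s1]) := cond_isProbabilityMeasure hμs1ne
  haveI hPμ0 : IsProbabilityMeasure (μ[|s0]) := cond_isProbabilityMeasure hμs0ne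
  have hac1 : (μ[|s1]) ≪ μ := cond_absolutelyContinuous
  have hac0 : (μ[|s0]) ≪ μ := cond_absolutelyContinuous
  have hXU : Measurable fun ω => (X ω, U ω) := hX.prodMk hU
  have hm : m ≤ ‹MeasurableSpace Ω› := by rw [hmeq]; exact hXU.comap_le
  have hmX : mX ≤ ‹MeasurableSpace Ω› := by rw [hmXeq]; exact hX.comap_le
  have hXmX : Measurable[mX] X := by rw [hmXeq]; exact fun s hs => ⟨s, hs, rfl⟩
  -- a.e. ω in the trial measure has S ω = 1
  have hae1 : ∀ᵐ ω ∂(μ[|s1]), S ω = 1 := by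
    have h : ∀ᵐ ω ∂(μ.restrict s1), S ω = 1 :=
      (ae_restrict_iff' hms1).2 (Filter.Eventually.of_forall fun ω h => h)
    exact (show (μ[|s1]) = (μ s1)⁻¹ • μ.restrict s1 from rfl) ▸ Measure.ae_smul_measure h _
  -- ## conditional selection probabilities (canonical versions)
  set Q1 : Ω → ℝ := condExp m μ (s1.indicator fun _ => (1:ℝ)) with hQ1def
  set Q0 : Ω → ℝ := condExp m μ (s0.indicator fun _ => (1:ℝ)) with hQ0def
  have hQ1sm : StronglyMeasurable[m] Q1 := stronglyMeasurable_condExp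
  have hQ0sm : StronglyMeasurable[m] Q0 := stronglyMeasurable_condExp
  have hQ1m : Measurable[m] Q1 := hQ1sm.measurable
  have hQ1nn : 0 ≤ᵐ[μ] Q1 :=
    condExp_nonneg (Filter.Eventually.of_forall fun ω =>
      Set.indicator_nonneg (fun _ _ => zero_le_one) ω)
  have hQ0nn : 0 ≤ᵐ[μ] Q0 :=
    condExp_nonneg (Filter.Eventually.of_forall fun ω =>
      Set.indicator_nonneg (fun _ _ => zero_le_one) ω)
  have hind1int : Integrable (s1.indicator fun _ => (1:ℝ)) μ := (integrable_const 1).indicator hms1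
  have hind0int : Integrable (s0.indicator fun _ => (1:ℝ)) μ := (integrable_const 1).indicator hms0
  have hposQ : ∀ᵐ ω ∂(μ[|s0]), 0 < Q1 ω := by
    have h1 : p1 =ᵐ[μ[|s0]] Q1 := hp1.filter_mono hac0.ae_le
    filter_upwards [hpos, h1] with ω h h'
    rw [← h']; exact h
  -- ## transfer of m-measurable a.e. statements from the trial to the target population
  have htransfer : ∀ f g : Ω → ℝ, StronglyMeasurable[m] f → StronglyMeasurable[m] g →
      f =ᵐ[μ[|s1]] g → f =ᵐ[μ[|s0]] g := by
    intro f g hf hg hfg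
    have hDm : MeasurableSet[m] {ω | ¬ f ω = g ω} := by
      have := (measurableSet_eq_fun (m := m) hf.measurable hg.measurable).compl
      rwa [compl_setOf] at this
    set D := {ω | ¬ f ω = g ω} with hDdef
    have hDamb : MeasurableSet D := hm _ hDm
    have hμ1D : (μ[|s1]) D = 0 := ae_iff.mp hfg
    have hres : μ (s1 ∩ D) = 0 := by
      have hca := cond_apply hms1 μ D
      rw [hμ1D] at hca
      rcases mul_eq_zero.mp hca.symm with h | h
      · exact absurd (ENNReal.inv_eq_zero.mp h) hμs1top
      · exact h
    have hQ1int : ∫ ω in D, Q1 ω ∂μ = 0 := by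
      rw [hQ1def, setIntegral_condExp hm hind1int hDm]
      have : ∫ ω in D, (s1.indicator fun _ => (1:ℝ)) ω ∂μ = ((μ.restrict D) s1).toReal := by
        exact integral_indicator_one hms1
      rw [this, Measure.restrict_apply hms1, hres, ENNReal.toReal_zero]
    have hQ1zero : ∀ᵐ ω ∂μ, ω ∈ D → Q1 ω = 0 := by
      have hint : Integrable Q1 (μ.restrict D) := integrable_condExp.restrict
      have hnn : 0 ≤ᵐ[μ.restrict D] Q1 := ae_restrict_of_ae hQ1nn
      have hz := (integral_eq_zero_iff_of_nonneg_ae hnn hint).mp hQ1int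
      exact (ae_restrict_iff' hDamb).mp hz
    have h1 : (μ[|s0]) {ω | 0 < Q1 ω}ᶜ = 0 := by
      have h := ae_iff.mp hposQ
      rwa [← compl_setOf] at h
    have h2 : (μ[|s0]) (D ∩ {ω | 0 < Q1 ω}) = 0 := by
      refine hac0 (measure_mono_null ?_ (ae_iff.mp hQ1zero))
      intro ω ⟨hωD, hωQ⟩
      simp only [mem_setOf_eq, Classical.not_imp]
      exact ⟨hωD, ne_of_gt hωQ⟩
    have hsub : D ⊆ (D ∩ {ω | 0 < Q1 ω}) ∪ {ω | 0 < Q1 ω}ᶜ := by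
      intro ω hω
      by_cases h : 0 < Q1 ω
      · exact Or.inl ⟨hω, h⟩
      · exact Or.inr h
    have hD0 : (μ[|s0]) D = 0 :=
      le_antisymm (le_trans (measure_mono hsub)
        (le_trans (measure_union_le _ _) (by rw [h1, h2, add_zero]))) zero_le
    exact ae_iff.mpr hD0
  -- ## Q0 vanishes a.e. where Q1 vanishes
  have hQ1Q0 : ∀ᵐ ω ∂μ, Q1 ω = 0 → Q0 ω = 0 := by
    set D' := {ω | Q1 ω = 0} with hD'def
    have hD'm : MeasurableSet[m] D' := hQ1m (measurableSet_singleton 0)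
    have hD'amb : MeasurableSet D' := hm _ hD'm
    have hμ0D' : (μ[|s0]) D' = 0 := by
      refine measure_mono_null ?_ (ae_iff.mp hposQ)
      intro ω hω
      simp only [mem_setOf_eq, not_lt]
      exact le_of_eq hω
    have hres : μ (s0 ∩ D') = 0 := by
      have hca := cond_apply hms0 μ D'
      rw [hμ0D'] at hca
      rcases mul_eq_zero.mp hca.symm with h | h
      · exact absurd (ENNReal.inv_eq_zero.mp h) hμs0top
      · exact h
    have hQ0int : ∫ ω in D', Q0 ω ∂μ = 0 := by
      rw [hQ0def, setIntegral_condExp hm hind0int hD'm]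
      have : ∫ ω in D', (s0.indicator fun _ => (1:ℝ)) ω ∂μ = ((μ.restrict D') s0).toReal :=
        integral_indicator_one hms0
      rw [this, Measure.restrict_apply hms0, hres, ENNReal.toReal_zero]
    have hint : Integrable Q0 (μ.restrict D') := integrable_condExp.restrict
    have hnn : 0 ≤ᵐ[μ.restrict D'] Q0 := ae_restrict_of_ae hQ0nn
    have hz := (integral_eq_zero_iff_of_nonneg_ae hnn hint).mp hQ0int
    exact (ae_restrict_iff' hD'amb).mp hz
  -- ## the weight w and the outcome vector V
  set aind : Ω → ℝ := ({ω | A ω = 1}).indicator (fun _ => (1:ℝ)) with hainddef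
  have haindm : Measurable aind := measurable_const.indicator (hA (measurableSet_singleton 1))
  have haind1 : ∀ ω, A ω = 1 → aind ω = 1 := fun ω h => by
    simp [hainddef, Set.indicator_apply, h]
  have haind0 : ∀ ω, A ω = 0 → aind ω = 0 := fun ω h => by
    simp only [hainddef, Set.indicator_apply, mem_setOf_eq, h]
    norm_num
  set w : Ω → ℝ := fun ω => aind ω - e1 (X ω) with hwdef
  have hwm : Measurable w := haindm.sub (he1.comp hX)
  have hwb : ∀ ω, |w ω| ≤ 1 := by
    intro ω
    have h := hepos (X ω)
    rw [abs_le]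
    rcases hAbin ω with h0 | h1
    · simp only [hwdef]
      rw [haind0 ω h0]
      constructor <;> linarith [h.1, h.2]
    · simp only [hwdef]
      rw [haind1 ω h1]
      constructor <;> linarith [h.1, h.2]
  set V : Ω → ℝ × ℝ × 𝓤 := fun ω => (Y1 ω, Y0 ω, U ω) with hVdef
  have hVm : Measurable V := hY1.prodMk (hY0.prodMk hU)
  -- ## base case: rectangle test functions
  have hbase : ∀ B1 : Set 𝓧, MeasurableSet B1 → ∀ B2 : Set (ℝ × ℝ × 𝓤), MeasurableSet B2 →
      ∫ ω, (B1.indicator (fun _ => (1:ℝ)) (X ω) * B2.indicator (fun _ => (1:ℝ)) (V ω)) * w ω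
        ∂(μ[|s1]) = 0 := by
    intro B1 hB1 B2 hB2
    set φ : ℝ × ℝ × 𝓤 → ℝ := B2.indicator (fun _ => 1) with hφdef
    set ψf : ℝ → ℝ := ({1} : Set ℝ).indicator (fun _ => 1) with hψfdef
    have hφm : Measurable φ := measurable_const.indicator hB2
    have hψfm : Measurable ψf := measurable_const.indicator (measurableSet_singleton 1)
    have hφb : ∀ b, |φ b| ≤ 1 := fun b => aux_abs_indicator_le_one _ _
    have hψfb : ∀ c, |ψf c| ≤ 1 := fun c => aux_abs_indicator_le_one _ _
    have hrand' := hrand φ ψf hφm hψfm hφb hψfb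
    have hψA : (fun ω' => ψf (A ω')) = aind := by
      funext ω
      simp [hψfdef, hainddef, Set.indicator_apply, Pi.single_apply]
    rw [show (fun ω' => ψf (A ω')) = aind from hψA] at hrand'
    set ξ : Ω → ℝ := fun ω => B1.indicator (fun _ => (1:ℝ)) (X ω) with hξdef
    have hξmX : StronglyMeasurable[mX] ξ :=
      ((measurable_const.indicator hB1).comp hXmX).stronglyMeasurable
    have hξamb : Measurable ξ := (measurable_const.indicator hB1).comp hX
    have hξb : ∀ ω, |ξ ω| ≤ 1 := fun ω => aux_abs_indicator_le_one _ _
    have he1b : ∀ x, |e1 x| ≤ 1 := fun x => by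
      have h := hepos x
      rw [abs_le]; constructor <;> linarith [h.1, h.2]
    set Z : Ω → ℝ := fun ω => φ (Y1 ω, Y0 ω, U ω) * aind ω with hZdef
    set Zφ : Ω → ℝ := fun ω' => φ (Y1 ω', Y0 ω', U ω') with hZφdef
    -- now hrand' : condExp mX μ1 Z =ᵐ fun ω => condExp mX μ1 Zφ ω * condExp mX μ1 aind ω
    have hZeq : (fun ω => φ (Y1 ω, Y0 ω, U ω) * ψf (A ω)) = Z := by
      funext ω
      simp only [hZdef]
      rw [congrFun hψA ω]
    rw [hZeq] at hrand'
    have hZφamb : Measurable Zφ := hφm.comp hVm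
    have hZamb : Measurable Z := hZφamb.mul haindm
    have hZφb : ∀ ω, |Zφ ω| ≤ 1 := fun ω => hφb _
    have hZb : ∀ ω, |Z ω| ≤ 1 := fun ω => by
      simp only [hZdef]
      rw [abs_mul]
      calc |φ (Y1 ω, Y0 ω, U ω)| * |aind ω| ≤ 1 * 1 :=
            mul_le_mul (hφb _) (aux_abs_indicator_le_one _ _) (abs_nonneg _) zero_le_one
        _ = 1 := by norm_num
    have hZint : Integrable Z (μ[|s1]) :=
      aux_integrable_of_bdd hZamb.aestronglyMeasurable (C := 1) hZb
    have hZφint : Integrable Zφ (μ[|s1]) :=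
      aux_integrable_of_bdd hZφamb.aestronglyMeasurable (C := 1) hZφb
    have step1 : ∫ ω, ξ ω * Z ω ∂(μ[|s1])
        = ∫ ω, ξ ω * (condExp mX (μ[|s1]) Z ω) ∂(μ[|s1]) :=
      aux_pullout hmX hξmX
        (aux_integrable_of_bdd (hξamb.mul hZamb).aestronglyMeasurable (C := 1)
          (fun ω => by
            rw [abs_mul]
            calc |ξ ω| * |Z ω| ≤ 1 * 1 :=
                  mul_le_mul (hξb _) (hZb _) (abs_nonneg _) zero_le_one
              _ = 1 := by norm_num))
        hZint
    have step2 : ∫ ω, ξ ω * (condExp mX (μ[|s1]) Z ω) ∂(μ[|s1])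
        = ∫ ω, (ξ ω * e1 (X ω)) * (condExp mX (μ[|s1]) Zφ ω) ∂(μ[|s1]) := by
      refine integral_congr_ae ?_
      filter_upwards [hrand', heA] with ω h1 h2
      rw [h1, ← h2]
      ring
    have hξe1mX : StronglyMeasurable[mX] (fun ω => ξ ω * e1 (X ω)) :=
      hξmX.mul ((he1.comp hXmX).stronglyMeasurable)
    have step3 : ∫ ω, (ξ ω * e1 (X ω)) * (condExp mX (μ[|s1]) Zφ ω) ∂(μ[|s1])
        = ∫ ω, (ξ ω * e1 (X ω)) * Zφ ω ∂(μ[|s1]) :=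
      (aux_pullout hmX hξe1mX
        (aux_integrable_of_bdd (((hξamb.mul (he1.comp hX)).mul hZφamb).aestronglyMeasurable)
          (C := 1) (fun ω => by
            rw [abs_mul, abs_mul]
            calc |ξ ω| * |e1 (X ω)| * |Zφ ω| ≤ 1 * 1 * 1 := by
                  refine mul_le_mul (mul_le_mul (hξb _) (he1b _) (abs_nonneg _) zero_le_one)
                    (hZφb _) (abs_nonneg _) (by norm_num)
              _ = 1 := by norm_num))
        hZφint).symm
    have hkey : ∫ ω, ξ ω * Z ω ∂(μ[|s1]) = ∫ ω, (ξ ω * e1 (X ω)) * Zφ ω ∂(μ[|s1]) := by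
      rw [step1, step2, step3]
    have hia : Integrable (fun ω => (ξ ω * Zφ ω) * aind ω) (μ[|s1]) :=
      aux_integrable_of_bdd (((hξamb.mul hZφamb).mul haindm).aestronglyMeasurable) (C := 1)
        (fun ω => by
          rw [abs_mul, abs_mul]
          calc |ξ ω| * |Zφ ω| * |aind ω| ≤ 1 * 1 * 1 := by
                refine mul_le_mul (mul_le_mul (hξb _) (hZφb _) (abs_nonneg _) zero_le_one)
                  (aux_abs_indicator_le_one _ _) (abs_nonneg _) (by norm_num)
            _ = 1 := by norm_num)
    have hie : Integrable (fun ω => (ξ ω * Zφ ω) * e1 (X ω)) (μ[|s1]) :=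
      aux_integrable_of_bdd (((hξamb.mul hZφamb).mul (he1.comp hX)).aestronglyMeasurable)
        (C := 1) (fun ω => by
          rw [abs_mul, abs_mul]
          calc |ξ ω| * |Zφ ω| * |e1 (X ω)| ≤ 1 * 1 * 1 := by
                refine mul_le_mul (mul_le_mul (hξb _) (hZφb _) (abs_nonneg _) zero_le_one)
                  (he1b _) (abs_nonneg _) (by norm_num)
            _ = 1 := by norm_num)
    have hsplit : ∫ ω, (ξ ω * Zφ ω) * w ω ∂(μ[|s1])
        = ∫ ω, (ξ ω * Zφ ω) * aind ω ∂(μ[|s1])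
          - ∫ ω, (ξ ω * Zφ ω) * e1 (X ω) ∂(μ[|s1]) := by
      rw [← integral_sub hia hie]
      refine integral_congr_ae (Filter.Eventually.of_forall fun ω => ?_)
      simp only [hwdef]
      ring
    have e1eq : ∫ ω, (ξ ω * Zφ ω) * aind ω ∂(μ[|s1]) = ∫ ω, ξ ω * Z ω ∂(μ[|s1]) :=
      integral_congr_ae (Filter.Eventually.of_forall fun ω => by
        simp only [hZdef, hZφdef]; ring)
    have e2eq : ∫ ω, (ξ ω * Zφ ω) * e1 (X ω) ∂(μ[|s1])
        = ∫ ω, (ξ ω * e1 (X ω)) * Zφ ω ∂(μ[|s1]) :=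
      integral_congr_ae (Filter.Eventually.of_forall fun ω => by ring)
    show ∫ ω, (ξ ω * Zφ ω) * w ω ∂(μ[|s1]) = 0
    rw [hsplit, e1eq, e2eq, hkey, sub_self]
  -- ## extension to general integrands
  have hGinf := aux_Gsum (μ[|s1]) X V w hX hVm hwm hwb hbase
  -- ## key set-integral identity
  have hstar : ∀ s : Set Ω, MeasurableSet[m] s →
      ∫ ω in s, Ytil ω ∂(μ[|s1]) = ∫ ω in s, (Y1 ω - Y0 ω) ∂(μ[|s1]) := by
    intro s hs
    have hsamb : MeasurableSet s := hm _ hs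
    rw [hmeq] at hs
    obtain ⟨B, hB, hBeq⟩ := MeasurableSpace.measurableSet_comap.mp hs
    set H : 𝓧 × (ℝ × ℝ × 𝓤) → ℝ := fun p =>
      B.indicator (fun _ => (1:ℝ)) (p.1, p.2.2.2)
        * (p.2.1 / e1 p.1 + p.2.2.1 / (1 - e1 p.1)) with hHdef
    have hHm : Measurable H := by
      refine Measurable.mul ?_ ?_
      · exact (measurable_const.indicator hB).comp
          (measurable_fst.prodMk (measurable_snd.snd.snd))
      · exact (measurable_snd.fst.div (he1.comp measurable_fst)).add
          (measurable_snd.snd.fst.div (measurable_const.sub (he1.comp measurable_fst)))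
    have haeid : ∀ᵐ ω ∂(μ[|s1]),
        s.indicator (fun ω' => Ytil ω' - (Y1 ω' - Y0 ω')) ω = H (X ω, V ω) * w ω := by
      filter_upwards [hae1] with ω hSω
      have hHval : H (X ω, V ω) = B.indicator (fun _ => (1:ℝ)) (X ω, U ω)
          * (Y1 ω / e1 (X ω) + Y0 ω / (1 - e1 (X ω))) := rfl
      have hind_eq : B.indicator (fun _ => (1:ℝ)) (X ω, U ω)
          = s.indicator (fun _ => (1:ℝ)) ω := by
        by_cases hmem : ω ∈ s
        · have hBmem : (X ω, U ω) ∈ B := by rw [← hBeq] at hmem; exact hmem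
          rw [Set.indicator_of_mem hBmem, Set.indicator_of_mem hmem]
        · have hBmem : (X ω, U ω) ∉ B := by rw [← hBeq] at hmem; exact hmem
          rw [Set.indicator_of_notMem hBmem, Set.indicator_of_notMem hmem]
      have hepos' := hepos (X ω)
      have he0 : e1 (X ω) ≠ 0 := ne_of_gt hepos'.1
      have he1' : 1 - e1 (X ω) ≠ 0 := by
        intro h
        have : e1 (X ω) = 1 := by linarith
        linarith [hepos'.2]
      have hident : Ytil ω - (Y1 ω - Y0 ω)
          = (Y1 ω / e1 (X ω) + Y0 ω / (1 - e1 (X ω))) * w ω := by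
        rcases hAbin ω with h0 | h1
        · have hY' : Y ω = Y0 ω := (hcons ω hSω).2 h0
          have hw' : w ω = 0 - e1 (X ω) := by
            simp only [hwdef]
            rw [haind0 ω h0]
          have hYt : Ytil ω = (2 * 0 - 1) * Y0 ω / (1 - e1 (X ω)) := by
            rw [hYtil ω, h0, if_neg (by norm_num), hY']
          rw [hYt, hw']
          field_simp
          ring
        · have hY' : Y ω = Y1 ω := (hcons ω hSω).1 h1
          have hw' : w ω = 1 - e1 (X ω) := by
            simp only [hwdef]
            rw [haind1 ω h1]
          have hYt : Ytil ω = (2 * 1 - 1) * Y1 ω / e1 (X ω) := by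
            rw [hYtil ω, h1, if_pos rfl, hY']
          rw [hYt, hw']
          field_simp
          ring
      rw [hHval, hind_eq]
      by_cases hmem : ω ∈ s
      · rw [Set.indicator_of_mem hmem, Set.indicator_of_mem hmem, hident]
        ring
      · rw [Set.indicator_of_notMem hmem, Set.indicator_of_notMem hmem]
        ring
    have hint0 : Integrable (s.indicator fun ω' => Ytil ω' - (Y1 ω' - Y0 ω')) (μ[|s1]) :=
      (hi2.sub hi1').indicator hsamb
    have hintH : Integrable (fun ω => H (X ω, V ω) * w ω) (μ[|s1]) := hint0.congr haeid
    have h0 : ∫ ω, H (X ω, V ω) * w ω ∂(μ[|s1]) = 0 := hGinf H hHm hintH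
    have h1 : ∫ ω in s, (Ytil ω - (Y1 ω - Y0 ω)) ∂(μ[|s1]) = 0 := by
      rw [← integral_indicator hsamb, integral_congr_ae haeid, h0]
    have h2 : ∫ ω in s, (Ytil ω - (Y1 ω - Y0 ω)) ∂(μ[|s1])
        = ∫ ω in s, Ytil ω ∂(μ[|s1]) - ∫ ω in s, (Y1 ω - Y0 ω) ∂(μ[|s1]) :=
      integral_sub hi2.integrableOn hi1'.integrableOn
    rw [h2] at h1
    linarith
  -- ## the conditional expectations of Ytil and Y1 - Y0 agree in the trial
  have hkey1 : condExp m (μ[|s1]) Ytil =ᵐ[μ[|s1]] condExp m (μ[|s1]) (fun ω => Y1 ω - Y0 ω) := by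
    refine ae_eq_condExp_of_forall_setIntegral_eq hm hi1'
      (fun s _ _ => integrable_condExp.integrableOn) (fun s hs _ => ?_)
      (stronglyMeasurable_condExp.aestronglyMeasurable)
    rw [setIntegral_condExp hm hi2 hs]
    exact hstar s hs
  -- ## first conjunct
  have hconj1 : ψ = ∫ ω, condExp m (μ[|s1]) Ytil ω ∂(μ[|s0]) := by
    have e1' : ψ = ∫ ω, condExp m (μ[|s0]) (fun ω' => Y1 ω' - Y0 ω') ω ∂(μ[|s0]) := by
      rw [hψ, integral_condExp hm]
    have e2' : ∫ ω, condExp m (μ[|s0]) (fun ω' => Y1 ω' - Y0 ω') ω ∂(μ[|s0])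
        = ∫ ω, condExp m (μ[|s1]) (fun ω' => Y1 ω' - Y0 ω') ω ∂(μ[|s0]) :=
      integral_congr_ae htrans
    have e3' : ∫ ω, condExp m (μ[|s1]) (fun ω' => Y1 ω' - Y0 ω') ω ∂(μ[|s0])
        = ∫ ω, condExp m (μ[|s1]) Ytil ω ∂(μ[|s0]) :=
      integral_congr_ae (htransfer _ _ stronglyMeasurable_condExp stronglyMeasurable_condExp
        hkey1.symm)
    rw [e1', e2', e3']
  refine ⟨hconj1, ?_⟩
  -- ## second conjunct
  set G : Ω → ℝ := condExp m (μ[|s1]) Ytil with hGdef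
  have hGsm : StronglyMeasurable[m] G := stronglyMeasurable_condExp
  set ρf : Ω → ℝ := fun ω => Q0 ω / Q1 ω with hρdef
  have hρsm : StronglyMeasurable[m] ρf :=
    (Measurable.div hQ0sm.measurable hQ1sm.measurable).stronglyMeasurable
  have hpq : (fun ω => p0 ω / p1 ω * Ytil ω) =ᵐ[μ] (fun ω => ρf ω * Ytil ω) := by
    filter_upwards [hp0, hp1] with ω h0 h1
    simp only [hρdef]; rw [h0, h1]
  have hrint_μ1 : Integrable (fun ω => ρf ω * Ytil ω) (μ[|s1]) :=
    (aux_integrable_cond hμs1ne hi4).congr (hpq.filter_mono hac1.ae_le)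
  have hmulG := condExp_mul_of_stronglyMeasurable_left (μ := μ[|s1]) hρsm
    (show Integrable (ρf * Ytil) (μ[|s1]) from hrint_μ1) hi2
  have hρG_int : Integrable (fun ω => ρf ω * G ω) (μ[|s1]) := integrable_condExp.congr hmulG
  -- indicator products are integrable over μ
  have hint_prod1 : Integrable (fun ω => (ρf ω * G ω) * s1.indicator (fun _ => (1:ℝ)) ω) μ := by
    have h1 : IntegrableOn (fun ω => ρf ω * G ω) s1 μ :=
      aux_integrable_of_cond hμs1ne hμs1top hρG_int
    have h2 : Integrable (s1.indicator fun ω => ρf ω * G ω) μ :=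
      (integrable_indicator_iff hms1).mpr h1
    refine h2.congr (Filter.Eventually.of_forall fun ω => ?_)
    by_cases h : ω ∈ s1 <;> simp [Set.indicator_apply, h]
  have hint_G0 : Integrable (fun ω => G ω * s0.indicator (fun _ => (1:ℝ)) ω) μ := by
    have h1 : IntegrableOn G s0 μ := aux_integrable_of_cond hμs0ne hμs0top hi3
    have h2 : Integrable (s0.indicator G) μ := (integrable_indicator_iff hms0).mpr h1
    refine h2.congr (Filter.Eventually.of_forall fun ω => ?_)
    by_cases h : ω ∈ s0 <;> simp [Set.indicator_apply, h]
  have haeQ : (fun ω => (ρf ω * G ω) * Q1 ω) =ᵐ[μ] fun ω => G ω * Q0 ω := by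
    filter_upwards [hQ1Q0] with ω himp
    by_cases h : Q1 ω = 0
    · simp only [hρdef]
      rw [h, himp h]; ring
    · simp only [hρdef]
      field_simp
  have hchain : ∫ ω in s1, (p0 ω / p1 ω) * Ytil ω ∂μ = α * ψ := by
    calc ∫ ω in s1, (p0 ω / p1 ω) * Ytil ω ∂μ
        = (μ s1).toReal * ∫ ω, (p0 ω / p1 ω) * Ytil ω ∂(μ[|s1]) :=
          aux_cond_integral hμs1ne hμs1top _
      _ = (μ s1).toReal * ∫ ω, ρf ω * Ytil ω ∂(μ[|s1]) := by
          rw [integral_congr_ae (hpq.filter_mono hac1.ae_le)]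
      _ = (μ s1).toReal * ∫ ω, ρf ω * G ω ∂(μ[|s1]) := by
          rw [aux_pullout hm hρsm hrint_μ1 hi2]
      _ = ∫ ω in s1, ρf ω * G ω ∂μ := (aux_cond_integral hμs1ne hμs1top _).symm
      _ = ∫ ω, s1.indicator (fun ω' => ρf ω' * G ω') ω ∂μ := (integral_indicator hms1).symm
      _ = ∫ ω, (ρf ω * G ω) * s1.indicator (fun _ => (1:ℝ)) ω ∂μ := by
          refine integral_congr_ae (Filter.Eventually.of_forall fun ω => ?_)
          by_cases h : ω ∈ s1 <;> simp [Set.indicator_apply, h]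
      _ = ∫ ω, (ρf ω * G ω) * Q1 ω ∂μ :=
          aux_pullout hm (hρsm.mul hGsm) hint_prod1 hind1int
      _ = ∫ ω, G ω * Q0 ω ∂μ := integral_congr_ae haeQ
      _ = ∫ ω, G ω * s0.indicator (fun _ => (1:ℝ)) ω ∂μ :=
          (aux_pullout hm hGsm hint_G0 hind0int).symm
      _ = ∫ ω, s0.indicator (fun ω' => G ω') ω ∂μ := by
          refine integral_congr_ae (Filter.Eventually.of_forall fun ω => ?_)
          by_cases h : ω ∈ s0 <;> simp [Set.indicator_apply, h]
      _ = ∫ ω in s0, G ω ∂μ := integral_indicator hms0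
      _ = (μ s0).toReal * ∫ ω, G ω ∂(μ[|s0]) := aux_cond_integral hμs0ne hμs0top _
      _ = α * ψ := by rw [← hα, ← hconj1]
  rw [hchain]
  field_simp


/-- Proposition 1 (latent identifiability): under consistency, randomization,
CATE transportability, and positivity, the target parameter
`ψ = E[Y(1) − Y(0) | S=0]` satisfies both the g-formula and the inverse-odds
weighting representation with the transformed outcome `Ỹ = (2A−1)Y/e(A|X)`. -/
theorem stmt1 {Ω 𝓧 𝓤 : Type*} [MeasurableSpace Ω] [MeasurableSpace 𝓧] [MeasurableSpace 𝓤]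
    (μ : Measure Ω) [IsProbabilityMeasure μ]
    (X : Ω → 𝓧) (U : Ω → 𝓤) (hX : Measurable X) (hU : Measurable U)
    (S A Y Y0 Y1 : Ω → ℝ) (hS : Measurable S) (hA : Measurable A)
    (hY : Measurable Y) (hY0 : Measurable Y0) (hY1 : Measurable Y1)
    (hSbin : ∀ ω, S ω = 0 ∨ S ω = 1) (hAbin : ∀ ω, A ω = 0 ∨ A ω = 1)
    (α : ℝ) (hα : α = (μ {ω | S ω = 0}).toReal) (hαpos : 0 < α) (hα1 : α < 1)
    -- the known propensity score `e(1|X) = P(A=1 | X, S=1)`, strictly between 0 and 1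
    (e1 : 𝓧 → ℝ) (he1 : Measurable e1) (hepos : ∀ x, 0 < e1 x ∧ e1 x < 1)
    (heA : (fun ω => e1 (X ω)) =ᵐ[μ[|{ω | S ω = 1}]]
      condExp (MeasurableSpace.comap X inferInstance) (μ[|{ω | S ω = 1}])
        (Set.indicator {ω | A ω = 1} (fun _ => (1 : ℝ))))
    -- Assumption 1(i): consistency
    (hcons : ∀ ω, S ω = 1 → ((A ω = 1 → Y ω = Y1 ω) ∧ (A ω = 0 → Y ω = Y0 ω)))
    -- Assumption 1(ii): randomization `(Y(1), Y(0), U) ⟂ A | (X, S=1)`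
    (hrand : CondIndepFunAE X (fun ω => (Y1 ω, Y0 ω, U ω)) A (μ[|{ω | S ω = 1}]))
    -- Assumption 1(iii): CATE transportability given `(X, U)`
    (htrans : condExp (MeasurableSpace.comap (fun ω => (X ω, U ω)) inferInstance)
          (μ[|{ω | S ω = 0}]) (fun ω => Y1 ω - Y0 ω)
        =ᵐ[μ[|{ω | S ω = 0}]]
        condExp (MeasurableSpace.comap (fun ω => (X ω, U ω)) inferInstance)
          (μ[|{ω | S ω = 1}]) (fun ω => Y1 ω - Y0 ω))
    -- versions of the conditional trial-participation probabilities `P(S=s | X, U)`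
    (p0 p1 : Ω → ℝ)
    (hp0 : p0 =ᵐ[μ] condExp (MeasurableSpace.comap (fun ω => (X ω, U ω)) inferInstance) μ
      (Set.indicator {ω | S ω = 0} (fun _ => (1 : ℝ))))
    (hp1 : p1 =ᵐ[μ] condExp (MeasurableSpace.comap (fun ω => (X ω, U ω)) inferInstance) μ
      (Set.indicator {ω | S ω = 1} (fun _ => (1 : ℝ))))
    -- Assumption 1(iv): positivity
    (hpos : ∀ᵐ ω ∂(μ[|{ω | S ω = 0}]), 0 < p1 ω)
    -- the transformed outcome `Ỹ = (2A−1)Y / e(A|X)`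
    (Ytil : Ω → ℝ)
    (hYtil : ∀ ω, Ytil ω =
      (2 * A ω - 1) * Y ω / (if A ω = 1 then e1 (X ω) else 1 - e1 (X ω)))
    -- target parameter
    (ψ : ℝ) (hψ : ψ = ∫ ω, (Y1 ω - Y0 ω) ∂(μ[|{ω | S ω = 0}]))
    -- integrability
    (hi1 : Integrable (fun ω => Y1 ω - Y0 ω) (μ[|{ω | S ω = 0}]))
    (hi1' : Integrable (fun ω => Y1 ω - Y0 ω) (μ[|{ω | S ω = 1}]))
    (hi2 : Integrable Ytil (μ[|{ω | S ω = 1}]))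
    (hi3 : Integrable (fun ω => condExp (MeasurableSpace.comap (fun ω' => (X ω', U ω'))
      inferInstance) (μ[|{ω | S ω = 1}]) Ytil ω) (μ[|{ω | S ω = 0}]))
    (hi4 : Integrable (fun ω => (p0 ω / p1 ω) * Ytil ω) μ) :
    ψ = ∫ ω, condExp (MeasurableSpace.comap (fun ω' => (X ω', U ω')) inferInstance)
          (μ[|{ω | S ω = 1}]) Ytil ω ∂(μ[|{ω | S ω = 0}]) ∧
      ψ = (1 / α) * ∫ ω in {ω | S ω = 1}, (p0 ω / p1 ω) * Ytil ω ∂μ := by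
  exact stmt1_aux _ _ μ X U hX hU rfl rfl S A Y Y0 Y1 hS hA hY hY0 hY1 hSbin hAbin α hα hαpos
    hα1 e1 he1 hepos heA hcons (fun φ ψf hφ hψ hbφ hbψ => hrand φ ψf hφ hψ hbφ hbψ) htrans
    p0 p1 hp0 hp1 hpos Ytil hYtil ψ hψ hi1 hi1' hi2 hi3 hi4
end
end

section
/- Suppose Z ⟂ W | (X,U,S=1) and W ⟂ S | (X,U). If q* is a square-integrable function of (Z,X) satisfying E[q*(Z,X) | X,U,S=1] = P(S=0|X,U)/P(S=1|X,U) almost surely, then q* also satisfies E[q*(Z,X) | W,X,S=1] = P(S=0|W,X)/P(S=1|W,X) almost surely. That is, Q* ⊂ Q. -/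
open MeasureTheory ProbabilityTheory Set

noncomputable section

open Filter
open scoped Topology ENNReal

namespace Lemma1Aux

lemma ind_abs_le {α : Type*} (s : Set α) (x : α) :
    |Set.indicator s (fun _ => (1 : ℝ)) x| ≤ 1 := by
  by_cases h : x ∈ s <;> simp [Set.indicator_apply, h]

lemma ind_nonneg {α : Type*} (s : Set α) (x : α) :
    0 ≤ Set.indicator s (fun _ => (1 : ℝ)) x := by
  by_cases h : x ∈ s <;> simp [Set.indicator_apply, h]

lemma ind_le_one {α : Type*} (s : Set α) (x : α) :
    Set.indicator s (fun _ => (1 : ℝ)) x ≤ 1 := by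
  by_cases h : x ∈ s <;> simp [Set.indicator_apply, h]

lemma ind_norm_le {α : Type*} (s : Set α) (x : α) :
    ‖Set.indicator s (fun _ => (1 : ℝ)) x‖ ≤ 1 := by
  simpa [Real.norm_eq_abs] using ind_abs_le s x

lemma integrable_of_bounded {Ω : Type*} [mΩ : MeasurableSpace Ω] {π : Measure Ω}
    [IsFiniteMeasure π] {f : Ω → ℝ}
    (hf : AEStronglyMeasurable f π) {c : ℝ} (hb : ∀ ω, ‖f ω‖ ≤ c) : Integrable f π :=
  (integrable_const c).mono' hf (Eventually.of_forall hb)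

lemma integral_mul_condexp {Ω : Type*} {m : MeasurableSpace Ω} [mΩ : MeasurableSpace Ω]
    (hm : m ≤ mΩ) (π : Measure Ω)
    [IsFiniteMeasure π] {f g : Ω → ℝ} (hf : StronglyMeasurable[m] f)
    (hfg : Integrable (fun ω => f ω * g ω) π) (hg : Integrable g π) :
    ∫ ω, f ω * g ω ∂π = ∫ ω, f ω * (condExp m π g) ω ∂π := by
  have h1 : condExp m π (fun ω => f ω * g ω) =ᵐ[π] fun ω => f ω * (condExp m π g) ω :=
    condExp_mul_of_stronglyMeasurable_left hf hfg hg
  rw [← integral_condExp (m := m) (μ := π) (f := fun ω => f ω * g ω) hm]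
  exact integral_congr_ae h1

lemma ext_from_pi {Ω α : Type*} [mΩ : MeasurableSpace Ω] [mα : MeasurableSpace α]
    (π : Measure Ω) [IsFiniteMeasure π]
    {Y : Ω → α} (hY : Measurable Y) {G1 G2 : Ω → ℝ}
    (hG1 : Integrable G1 π) (hG2 : Integrable G2 π)
    {𝒞 : Set (Set α)} (hgen : mα = MeasurableSpace.generateFrom 𝒞) (hpi : IsPiSystem 𝒞)
    (huniv : ∫ ω, G1 ω ∂π = ∫ ω, G2 ω ∂π)
    (hbasic : ∀ t ∈ 𝒞, ∫ ω, Set.indicator t (fun _ => (1:ℝ)) (Y ω) * G1 ω ∂π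
      = ∫ ω, Set.indicator t (fun _ => (1:ℝ)) (Y ω) * G2 ω ∂π) :
    ∀ ⦃t : Set α⦄, MeasurableSet t →
      ∫ ω, Set.indicator t (fun _ => (1:ℝ)) (Y ω) * G1 ω ∂π
      = ∫ ω, Set.indicator t (fun _ => (1:ℝ)) (Y ω) * G2 ω ∂π := by
  have intt : ∀ (G : Ω → ℝ), Integrable G π → ∀ (t : Set α), MeasurableSet t →
      Integrable (fun ω => Set.indicator t (fun _ => (1:ℝ)) (Y ω) * G ω) π := by
    intro G hG t ht
    refine hG.norm.mono' (((measurable_const.indicator ht).comp hY).aestronglyMeasurable.mul hG.1)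
      (Eventually.of_forall fun ω => ?_)
    rw [norm_mul]
    calc ‖Set.indicator t (fun _ => (1:ℝ)) (Y ω)‖ * ‖G ω‖ ≤ 1 * ‖G ω‖ :=
        mul_le_mul_of_nonneg_right (ind_norm_le t (Y ω)) (norm_nonneg _)
      _ = ‖G ω‖ := one_mul _
  refine MeasurableSpace.induction_on_inter hgen hpi ?_ hbasic ?_ ?_
  · simp
  · intro t ht hP
    have he : ∀ (G : Ω → ℝ), (fun ω => Set.indicator tᶜ (fun _ => (1:ℝ)) (Y ω) * G ω)
        = fun ω => G ω - Set.indicator t (fun _ => (1:ℝ)) (Y ω) * G ω := by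
      intro G; funext ω; by_cases h : Y ω ∈ t <;> simp [Set.indicator_apply, h]
    rw [he G1, he G2, integral_sub hG1 (intt G1 hG1 t ht), integral_sub hG2 (intt G2 hG2 t ht),
      huniv, hP]
  · intro f hdisj hmeas hP
    set A : ℕ → Set α := fun n => ⋃ i ∈ Finset.range n, f i with hA
    have hAmeas : ∀ n, MeasurableSet (A n) := fun n =>
      (Finset.range n).measurableSet_biUnion fun i _ => hmeas i
    have hPA : ∀ n, ∫ ω, Set.indicator (A n) (fun _ => (1:ℝ)) (Y ω) * G1 ω ∂π
        = ∫ ω, Set.indicator (A n) (fun _ => (1:ℝ)) (Y ω) * G2 ω ∂π := by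
      intro n
      induction n with
      | zero => simp [hA]
      | succ n ih =>
        have hAe : A (n+1) = f n ∪ A n := by
          simp only [hA, Finset.range_add_one, Finset.set_biUnion_insert]
        have hdis : Disjoint (f n) (A n) := by
          rw [Set.disjoint_iUnion₂_right]
          intro i hi
          exact (hdisj (Finset.mem_range.mp hi).ne).symm
        have hind : ∀ (G : Ω → ℝ),
            (fun ω => Set.indicator (A (n+1)) (fun _ => (1:ℝ)) (Y ω) * G ω)
            = fun ω => Set.indicator (f n) (fun _ => (1:ℝ)) (Y ω) * G ω
              + Set.indicator (A n) (fun _ => (1:ℝ)) (Y ω) * G ω := by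
          intro G; funext ω
          rw [hAe, Set.indicator_union_of_disjoint hdis]
          simp only [Pi.add_apply]
          ring
        rw [hind G1, hind G2, integral_add (intt G1 hG1 _ (hmeas n)) (intt G1 hG1 _ (hAmeas n)),
          integral_add (intt G2 hG2 _ (hmeas n)) (intt G2 hG2 _ (hAmeas n)), hP n, ih]
    have hconv : ∀ (G : Ω → ℝ), Integrable G π →
        Tendsto (fun n => ∫ ω, Set.indicator (A n) (fun _ => (1:ℝ)) (Y ω) * G ω ∂π) atTop
          (𝓝 (∫ ω, Set.indicator (⋃ i, f i) (fun _ => (1:ℝ)) (Y ω) * G ω ∂π)) := by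
      intro G hG
      refine tendsto_integral_of_dominated_convergence (fun ω => ‖G ω‖)
        (fun n => (((measurable_const.indicator (hAmeas n)).comp hY).aestronglyMeasurable.mul
          hG.1)) hG.norm (fun n => Eventually.of_forall fun ω => ?_)
        (Eventually.of_forall fun ω => ?_)
      · rw [norm_mul]
        calc ‖Set.indicator (A n) (fun _ => (1:ℝ)) (Y ω)‖ * ‖G ω‖ ≤ 1 * ‖G ω‖ :=
            mul_le_mul_of_nonneg_right (ind_norm_le (A n) (Y ω)) (norm_nonneg _)
          _ = ‖G ω‖ := one_mul _
      · by_cases h : Y ω ∈ ⋃ i, f i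
        · obtain ⟨i, hi⟩ := Set.mem_iUnion.mp h
          refine tendsto_atTop_of_eventually_const (i₀ := i + 1) fun n hn => ?_
          have hmem : Y ω ∈ A n :=
            Set.mem_biUnion (Finset.mem_range.mpr (Nat.lt_of_lt_of_le (Nat.lt_succ_self i) hn)) hi
          simp [Set.indicator_of_mem, hmem, Set.indicator_of_mem h]
        · have hnot : ∀ n, Y ω ∉ A n := by
            intro n hmem
            obtain ⟨i, _, hi⟩ := Set.mem_iUnion₂.mp hmem
            exact h (Set.mem_iUnion.mpr ⟨i, hi⟩)
          have he : (fun n => Set.indicator (A n) (fun _ => (1:ℝ)) (Y ω) * G ω)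
              = fun _ => (0:ℝ) := by
            funext n; simp [Set.indicator_of_notMem (hnot n)]
          rw [he, Set.indicator_of_notMem h, zero_mul]
          exact tendsto_const_nhds
    have he : (fun n => ∫ ω, Set.indicator (A n) (fun _ => (1:ℝ)) (Y ω) * G1 ω ∂π)
        = fun n => ∫ ω, Set.indicator (A n) (fun _ => (1:ℝ)) (Y ω) * G2 ω ∂π := funext hPA
    exact tendsto_nhds_unique (he ▸ hconv G1 hG1) (hconv G2 hG2)

lemma ext_L1 {Ω α : Type*} [mΩ : MeasurableSpace Ω] [mα : MeasurableSpace α]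
    (π : Measure Ω) [IsFiniteMeasure π]
    {Y : Ω → α} (hY : Measurable Y) {G1 G2 : Ω → ℝ}
    (hG1 : Integrable G1 π) (hG2 : Integrable G2 π)
    (hb1 : ∀ᵐ ω ∂π, ‖G1 ω‖ ≤ 1) (hb2 : ∀ᵐ ω ∂π, ‖G2 ω‖ ≤ 1)
    (hind : ∀ t : Set α, MeasurableSet t →
      ∫ ω, Set.indicator t (fun _ => (1:ℝ)) (Y ω) * G1 ω ∂π
      = ∫ ω, Set.indicator t (fun _ => (1:ℝ)) (Y ω) * G2 ω ∂π)
    {f : α → ℝ} (hf : Measurable f) (hfi : Integrable (fun ω => f (Y ω)) π) :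
    ∫ ω, f (Y ω) * G1 ω ∂π = ∫ ω, f (Y ω) * G2 ω ∂π := by
  have ints : ∀ (s : SimpleFunc α ℝ) (G : Ω → ℝ), Integrable G π →
      Integrable (fun ω => s (Y ω) * G ω) π := by
    intro s G hG
    obtain ⟨C, hC⟩ := s.exists_forall_norm_le
    refine (hG.norm.const_mul C).mono'
      ((s.measurable.comp hY).aestronglyMeasurable.mul hG.1)
      (Eventually.of_forall fun ω => ?_)
    rw [norm_mul]
    exact mul_le_mul_of_nonneg_right (hC (Y ω)) (norm_nonneg _)
  have hsimple : ∀ s : SimpleFunc α ℝ,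
      ∫ ω, s (Y ω) * G1 ω ∂π = ∫ ω, s (Y ω) * G2 ω ∂π := by
    intro s
    induction s using SimpleFunc.induction with
    | @const c t ht =>
      have he : ∀ (G : Ω → ℝ),
          ∫ ω, (SimpleFunc.piecewise t ht (SimpleFunc.const α c)
            (SimpleFunc.const α 0)) (Y ω) * G ω ∂π
          = c * ∫ ω, Set.indicator t (fun _ => (1:ℝ)) (Y ω) * G ω ∂π := by
        intro G
        rw [← integral_const_mul]
        refine integral_congr_ae (Eventually.of_forall fun ω => ?_)
        by_cases h : Y ω ∈ t <;>
          simp [SimpleFunc.piecewise_apply, Set.indicator_apply, h]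
      rw [he G1, he G2, hind t ht]
    | @add s1 s2 _ ih1 ih2 =>
      have he : ∀ (G : Ω → ℝ),
          (fun ω => (s1 + s2) (Y ω) * G ω)
          = fun ω => s1 (Y ω) * G ω + s2 (Y ω) * G ω := by
        intro G; funext ω; simp [add_mul]
      rw [he G1, he G2, integral_add (ints s1 G1 hG1) (ints s2 G1 hG1),
        integral_add (ints s1 G2 hG2) (ints s2 G2 hG2), ih1, ih2]
  set F : ℕ → SimpleFunc α ℝ := fun n =>
    SimpleFunc.approxOn f hf Set.univ 0 (Set.mem_univ 0) n with hF
  have hF_le : ∀ n x, ‖F n x‖ ≤ ‖f x‖ + ‖f x‖ := fun n x =>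
    SimpleFunc.norm_approxOn_zero_le hf (Set.mem_univ 0) x n
  have hF_tendsto : ∀ x, Tendsto (fun n => F n x) atTop (𝓝 (f x)) := fun x =>
    SimpleFunc.tendsto_approxOn hf (Set.mem_univ 0) (by simp)
  have hcv : ∀ (G : Ω → ℝ), Integrable G π → (∀ᵐ ω ∂π, ‖G ω‖ ≤ 1) →
      Tendsto (fun n => ∫ ω, F n (Y ω) * G ω ∂π) atTop (𝓝 (∫ ω, f (Y ω) * G ω ∂π)) := by
    intro G hG hGb
    refine tendsto_integral_of_dominated_convergence (fun ω => ‖f (Y ω)‖ + ‖f (Y ω)‖)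
      (fun n => ((F n).measurable.comp hY).aestronglyMeasurable.mul hG.1)
      (hfi.norm.add hfi.norm) (fun n => ?_) (Eventually.of_forall fun ω =>
        (hF_tendsto (Y ω)).mul_const _)
    filter_upwards [hGb] with ω hω
    rw [norm_mul]
    calc ‖F n (Y ω)‖ * ‖G ω‖ ≤ (‖f (Y ω)‖ + ‖f (Y ω)‖) * 1 :=
        mul_le_mul (hF_le n (Y ω)) hω (norm_nonneg _) (by positivity)
      _ = ‖f (Y ω)‖ + ‖f (Y ω)‖ := mul_one _
  have he : (fun n => ∫ ω, F n (Y ω) * G1 ω ∂π) = fun n => ∫ ω, F n (Y ω) * G2 ω ∂π :=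
    funext fun n => hsimple (F n)
  exact tendsto_nhds_unique (he ▸ hcv G1 hG1 hb1) (hcv G2 hG2 hb2)

lemma integrable_ratio_mul_indicator {Ω : Type*} [mΩ : MeasurableSpace Ω]
    (π : Measure Ω) [IsFiniteMeasure π] {R0 R1 : Ω → ℝ} {s : Set Ω}
    (hms : MeasurableSet s) (hR0 : Measurable R0) (hR1 : Measurable R1)
    (hR0i : Integrable R0 π) (hR1i : Integrable R1 π)
    (hR0nn : ∀ᵐ ω ∂π, 0 ≤ R0 ω) (hR1pos : ∀ᵐ ω ∂π, 0 < R1 ω)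
    (key : ∀ n : ℕ, ∫ ω, min (R0 ω / R1 ω) n * Set.indicator s (fun _ => (1:ℝ)) ω ∂π
      = ∫ ω, min (R0 ω / R1 ω) n * R1 ω ∂π) :
    Integrable (fun ω => R0 ω / R1 ω * Set.indicator s (fun _ => (1:ℝ)) ω) π := by
  set G : ℕ → Ω → ℝ := fun n ω => min (R0 ω / R1 ω) n * Set.indicator s (fun _ => (1:ℝ)) ω
    with hG
  have hGmeas : ∀ n, Measurable (G n) := fun n =>
    ((hR0.div hR1).min measurable_const).mul (measurable_const.indicator hms)
  have hGnn : ∀ n, ∀ᵐ ω ∂π, 0 ≤ G n ω := by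
    intro n
    filter_upwards [hR0nn, hR1pos] with ω h0 h1
    exact mul_nonneg (le_min (div_nonneg h0 h1.le) (Nat.cast_nonneg n)) (ind_nonneg _ _)
  have hGint : ∀ n, Integrable (G n) π := by
    intro n
    refine (integrable_const (n : ℝ)).mono' (hGmeas n).aestronglyMeasurable ?_
    filter_upwards [hR0nn, hR1pos] with ω h0 h1
    rw [Real.norm_eq_abs, abs_mul,
      abs_of_nonneg (le_min (div_nonneg h0 h1.le) (Nat.cast_nonneg n) :
        (0:ℝ) ≤ min (R0 ω / R1 ω) n), abs_of_nonneg (ind_nonneg _ _)]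
    calc min (R0 ω / R1 ω) n * Set.indicator s (fun _ => (1:ℝ)) ω
        ≤ (n : ℝ) * 1 := mul_le_mul (min_le_right _ _) (ind_le_one _ _) (ind_nonneg _ _)
          (Nat.cast_nonneg n)
      _ = (n : ℝ) := mul_one _
  have hint2 : ∀ n : ℕ, Integrable (fun ω => min (R0 ω / R1 ω) n * R1 ω) π := by
    intro n
    refine (hR1i.norm.const_mul n).mono'
      (((hR0.div hR1).min measurable_const).aestronglyMeasurable.mul hR1i.1) ?_
    filter_upwards [hR0nn, hR1pos] with ω h0 h1
    rw [norm_mul]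
    exact mul_le_mul_of_nonneg_right (by
      rw [Real.norm_eq_abs, abs_of_nonneg (le_min (div_nonneg h0 h1.le) (Nat.cast_nonneg n))]
      exact min_le_right _ _) (norm_nonneg _)
  have hbound : ∀ n, ∫ ω, G n ω ∂π ≤ ∫ ω, R0 ω ∂π := by
    intro n
    rw [hG, key n]
    refine integral_mono_ae (hint2 n) hR0i ?_
    filter_upwards [hR0nn, hR1pos] with ω h0 h1
    calc min (R0 ω / R1 ω) n * R1 ω ≤ R0 ω / R1 ω * R1 ω :=
        mul_le_mul_of_nonneg_right (min_le_left _ _) h1.le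
      _ = R0 ω := div_mul_cancel₀ _ h1.ne'
  have hlim : ∀ ω, Tendsto (fun n => G n ω) atTop
      (𝓝 (R0 ω / R1 ω * Set.indicator s (fun _ => (1:ℝ)) ω)) := by
    intro ω
    refine Tendsto.mul_const _ ?_
    refine tendsto_atTop_of_eventually_const (i₀ := ⌈R0 ω / R1 ω⌉₊) fun n hn => ?_
    exact min_eq_left ((Nat.le_ceil _).trans (Nat.cast_le.mpr hn))
  refine ⟨((hR0.div hR1).mul (measurable_const.indicator hms)).aestronglyMeasurable, ?_⟩
  show (∫⁻ ω, (‖R0 ω / R1 ω * Set.indicator s (fun _ => (1:ℝ)) ω‖₊ : ℝ≥0∞) ∂π) < ∞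
  calc ∫⁻ ω, (‖R0 ω / R1 ω * Set.indicator s (fun _ => (1:ℝ)) ω‖₊ : ℝ≥0∞) ∂π
      = ∫⁻ ω, liminf (fun n => (‖G n ω‖₊ : ℝ≥0∞)) atTop ∂π := by
        refine lintegral_congr fun ω => ?_
        exact (((ENNReal.continuous_coe.tendsto _).comp (hlim ω).nnnorm).liminf_eq).symm
    _ ≤ liminf (fun n => ∫⁻ ω, (‖G n ω‖₊ : ℝ≥0∞) ∂π) atTop :=
        lintegral_liminf_le fun n => (hGmeas n).nnnorm.coe_nnreal_ennreal
    _ ≤ ENNReal.ofReal (∫ ω, R0 ω ∂π) := by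
        have hper : ∀ n : ℕ, ∫⁻ ω, (‖G n ω‖₊ : ℝ≥0∞) ∂π ≤ ENNReal.ofReal (∫ ω, R0 ω ∂π) := by
          intro n
          have h1 : ∫⁻ ω, (‖G n ω‖₊ : ℝ≥0∞) ∂π = ENNReal.ofReal (∫ ω, G n ω ∂π) := by
            rw [ofReal_integral_eq_lintegral_ofReal (hGint n) (hGnn n)]
            refine lintegral_congr_ae ?_
            filter_upwards [hGnn n] with ω h0
            exact Real.enorm_eq_ofReal h0
          rw [h1]
          exact ENNReal.ofReal_le_ofReal (hbound n)
        calc liminf (fun n => ∫⁻ ω, (‖G n ω‖₊ : ℝ≥0∞) ∂π) atTop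
            ≤ liminf (fun _ : ℕ => ENNReal.ofReal (∫ ω, R0 ω ∂π)) atTop :=
              Filter.liminf_le_liminf (Eventually.of_forall hper)
          _ = ENNReal.ofReal (∫ ω, R0 ω ∂π) := Filter.liminf_const _
    _ < ∞ := ENNReal.ofReal_lt_top


lemma cancel_helper {P0 P1 c k : ℝ} (h : P1 ≠ 0) :
    P0 / P1 * c * (k * P1) = c * (k * P0) := by
  field_simp

lemma cancel_helper2 {R0 R1 b : ℝ} (h : R1 ≠ 0) :
    b * R0 = R0 / R1 * b * R1 := by
  field_simp

lemma norm_mul_le_one {a b : ℝ} (ha : ‖a‖ ≤ 1) (hb : ‖b‖ ≤ 1) : ‖a * b‖ ≤ 1 := by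
  rw [norm_mul]
  exact mul_le_one₀ ha (norm_nonneg _) hb

lemma norm_mul_mul_le_mid {a b c : ℝ} (ha : ‖a‖ ≤ 1) (hc : ‖c‖ ≤ 1) : ‖a * b * c‖ ≤ ‖b‖ := by
  rw [norm_mul, norm_mul]
  calc ‖a‖ * ‖b‖ * ‖c‖ ≤ 1 * ‖b‖ * 1 := by gcongr
    _ = ‖b‖ := by ring

lemma norm_mul_mul_le_right {a b c : ℝ} (ha : ‖a‖ ≤ 1) (hb : ‖b‖ ≤ 1) : ‖a * b * c‖ ≤ ‖c‖ := by
  have h : a * b * c = a * c * b := by ring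
  rw [h]
  exact norm_mul_mul_le_mid ha hb

lemma norm_mul_mul_le_left {a b c : ℝ} (hb : ‖b‖ ≤ 1) (hc : ‖c‖ ≤ 1) : ‖a * b * c‖ ≤ ‖a‖ := by
  have h : a * b * c = b * a * c := by ring
  rw [h]
  exact norm_mul_mul_le_mid hb hc

lemma norm_helper3 {a b c d : ℝ} (hb : ‖b‖ ≤ 1) (hc : ‖c‖ ≤ 1) :
    ‖a * b * (c * d)‖ ≤ ‖a * d‖ := by
  rw [norm_mul, norm_mul, norm_mul, norm_mul]
  calc ‖a‖ * ‖b‖ * (‖c‖ * ‖d‖) ≤ ‖a‖ * 1 * (1 * ‖d‖) := by gcongr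
    _ = ‖a‖ * ‖d‖ := by ring

lemma norm_helper4 {a b c d : ℝ} (hb : ‖b‖ ≤ 1) (hc : ‖c‖ ≤ 1) :
    ‖a * (b * c) * d‖ ≤ ‖a * d‖ := by
  have h : a * (b * c) * d = a * b * (c * d) := by ring
  rw [h]
  exact norm_helper3 hb hc

end Lemma1Aux

open Lemma1Aux

/-- σ-algebra generated by a pair of maps. -/
abbrev mPair {Ω α β : Type*} [MeasurableSpace α] [MeasurableSpace β]
    (f : Ω → α) (g : Ω → β) : MeasurableSpace Ω :=
  MeasurableSpace.comap (fun ω => (f ω, g ω)) inferInstance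

/-- Second part of Lemma 1: under `Z ⟂ W | (X,U,S=1)` and `W ⟂ S | (X,U)`,
any full-data trial bridge function `q*` (with
`E[q*(Z,X) | X,U,S=1] = P(S=0|X,U)/P(S=1|X,U)`) also satisfies
`E[q*(Z,X) | W,X,S=1] = P(S=0|W,X)/P(S=1|W,X)`; i.e. `Q* ⊆ Q`. -/
theorem stmt3 {Ω 𝓧 𝓤 𝓦 𝓩 : Type*} [MeasurableSpace Ω] [MeasurableSpace 𝓧]
    [MeasurableSpace 𝓤] [MeasurableSpace 𝓦] [MeasurableSpace 𝓩]
    (μ : Measure Ω) [IsProbabilityMeasure μ]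
    (X : Ω → 𝓧) (U : Ω → 𝓤) (W : Ω → 𝓦) (Z : Ω → 𝓩)
    (hX : Measurable X) (hU : Measurable U) (hW : Measurable W) (hZ : Measurable Z)
    (S : Ω → ℝ) (hS : Measurable S) (hSbin : ∀ ω, S ω = 0 ∨ S ω = 1)
    -- Assumption 2(i): `Z ⟂ W | (X, U, S=1)`
    (hZW : CondIndepFunAE (fun ω => (X ω, U ω)) Z W (μ[|{ω | S ω = 1}]))
    -- Assumption 2(iii): `W ⟂ S | (X, U)`
    (hWS : CondIndepFunAE (fun ω => (X ω, U ω)) W S μ)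
    -- versions of `P(S=s | X, U)` with positivity
    (p0 p1 : Ω → ℝ)
    (hp0 : p0 =ᵐ[μ] condExp (MeasurableSpace.comap (fun ω => (X ω, U ω)) inferInstance) μ
      (Set.indicator {ω | S ω = 0} (fun _ => (1 : ℝ))))
    (hp1 : p1 =ᵐ[μ] condExp (MeasurableSpace.comap (fun ω => (X ω, U ω)) inferInstance) μ
      (Set.indicator {ω | S ω = 1} (fun _ => (1 : ℝ))))
    (hp1pos : ∀ᵐ ω ∂μ, 0 < p1 ω)
    -- versions of `P(S=s | W, X)` with positivity
    (r0 r1 : Ω → ℝ)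
    (hr0 : r0 =ᵐ[μ] condExp (MeasurableSpace.comap (fun ω => (W ω, X ω)) inferInstance) μ
      (Set.indicator {ω | S ω = 0} (fun _ => (1 : ℝ))))
    (hr1 : r1 =ᵐ[μ] condExp (MeasurableSpace.comap (fun ω => (W ω, X ω)) inferInstance) μ
      (Set.indicator {ω | S ω = 1} (fun _ => (1 : ℝ))))
    (hr1pos : ∀ᵐ ω ∂μ, 0 < r1 ω)
    -- `q*` is a square-integrable full-data trial bridge function
    (q : 𝓩 × 𝓧 → ℝ) (hq : Measurable q)
    (hq2 : MemLp (fun ω => q (Z ω, X ω)) 2 (μ[|{ω | S ω = 1}]))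
    (hstar : condExp (MeasurableSpace.comap (fun ω => (X ω, U ω)) inferInstance)
        (μ[|{ω | S ω = 1}]) (fun ω => q (Z ω, X ω))
        =ᵐ[μ[|{ω | S ω = 1}]] fun ω => p0 ω / p1 ω) :
    condExp (MeasurableSpace.comap (fun ω => (W ω, X ω)) inferInstance)
        (μ[|{ω | S ω = 1}]) (fun ω => q (Z ω, X ω))
        =ᵐ[μ[|{ω | S ω = 1}]] fun ω => r0 ω / r1 ω := by
  classical
  have hm1 : mPair X U ≤ ‹MeasurableSpace Ω› := measurable_iff_comap_le.mp (hX.prodMk hU)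
  have hm2 : mPair W X ≤ ‹MeasurableSpace Ω› := measurable_iff_comap_le.mp (hW.prodMk hX)
  set s1 : Set Ω := {ω | S ω = 1} with hs1def
  set s0 : Set Ω := {ω | S ω = 0} with hs0def
  have hms1 : MeasurableSet s1 := hS (measurableSet_singleton 1)
  have hms0 : MeasurableSet s0 := hS (measurableSet_singleton 0)
  set I1 : Ω → ℝ := Set.indicator s1 (fun _ => (1:ℝ)) with hI1def
  set I0 : Ω → ℝ := Set.indicator s0 (fun _ => (1:ℝ)) with hI0def
  set ν : Measure Ω := μ[|s1] with hνdef
  have hI1m : Measurable I1 := measurable_const.indicator hms1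
  have hI0m : Measurable I0 := measurable_const.indicator hms0
  have hI1int : Integrable I1 μ := integrable_of_bounded hI1m.aestronglyMeasurable
    (fun ω => ind_norm_le s1 ω)
  have hI0int : Integrable I0 μ := integrable_of_bounded hI0m.aestronglyMeasurable
    (fun ω => ind_norm_le s0 ω)
  -- μ s1 ≠ 0
  have hμs1 : μ s1 ≠ 0 := by
    intro h0
    have hnm : ∀ᵐ ω ∂μ, ω ∉ s1 := measure_eq_zero_iff_ae_notMem.mp h0
    have hI1z : I1 =ᵐ[μ] 0 := by
      filter_upwards [hnm] with ω hω
      simp [hI1def, Set.indicator_of_notMem hω]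
    have hc0 : condExp (mPair X U) μ I1 =ᵐ[μ] 0 := by
      calc condExp (mPair X U) μ I1 =ᵐ[μ] condExp (mPair X U) μ 0 := condExp_congr_ae hI1z
        _ = 0 := condExp_zero
    have hbad : ∀ᵐ ω ∂μ, False := by
      filter_upwards [hp1pos, hp1, hc0] with ω h1 h2 h3
      rw [h2, h3] at h1
      exact lt_irrefl _ h1
    obtain ⟨ω, hω⟩ := hbad.exists
    exact hω
  have hμs1top : μ s1 ≠ ∞ := measure_ne_top μ s1
  haveI hνprob : IsProbabilityMeasure ν := cond_isProbabilityMeasure hμs1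
  have hν_eq : ν = (μ s1)⁻¹ • μ.restrict s1 := rfl
  have hν_ac : ν ≪ μ := cond_absolutelyContinuous
  have haeν : ∀ {P : Ω → Prop}, (∀ᵐ ω ∂μ, P ω) → (∀ᵐ ω ∂ν, P ω) := fun h => hν_ac.ae_le h
  have hmul_ind : ∀ (f : Ω → ℝ) (ω : Ω), s1.indicator f ω = f ω * I1 ω := by
    intro f ω
    by_cases h : ω ∈ s1 <;> simp [hI1def, Set.indicator_apply, h]
  have cond_int_to : ∀ f : Ω → ℝ, Integrable f ν → Integrable (fun ω => f ω * I1 ω) μ := by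
    intro f hf
    rw [hν_eq] at hf
    have h1 : Integrable f (μ.restrict s1) :=
      (integrable_smul_measure (ENNReal.inv_ne_zero.mpr hμs1top)
        (ENNReal.inv_ne_top.mpr hμs1)).mp hf
    have h2 : Integrable (s1.indicator f) μ := (integrable_indicator_iff hms1).mpr h1
    exact h2.congr (Eventually.of_forall fun ω => hmul_ind f ω)
  have cond_int_from : ∀ f : Ω → ℝ, Integrable (fun ω => f ω * I1 ω) μ → Integrable f ν := by
    intro f hf
    have h2 : Integrable (s1.indicator f) μ :=
      hf.congr (Eventually.of_forall fun ω => (hmul_ind f ω).symm)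
    have h1 : Integrable f (μ.restrict s1) := (integrable_indicator_iff hms1).mp h2
    rw [hν_eq]
    exact (integrable_smul_measure (ENNReal.inv_ne_zero.mpr hμs1top)
      (ENNReal.inv_ne_top.mpr hμs1)).mpr h1
  have cond_eq : ∀ f : Ω → ℝ, ∫ ω, f ω ∂ν = (μ s1).toReal⁻¹ * ∫ ω, f ω * I1 ω ∂μ := by
    intro f
    rw [hν_eq, integral_smul_measure, ← integral_indicator hms1, ENNReal.toReal_inv, smul_eq_mul]
    congr 1
    exact integral_congr_ae (Eventually.of_forall fun ω => hmul_ind f ω)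
  -- basic integrability of q and p0/p1
  have hqint : Integrable (fun ω => q (Z ω, X ω)) ν := hq2.integrable one_le_two
  have hp01ν : Integrable (fun ω => p0 ω / p1 ω) ν := (integrable_condExp).congr hstar
  have hp01μ : Integrable (fun ω => p0 ω / p1 ω * I1 ω) μ := cond_int_to _ hp01ν
  -- measurability w.r.t. the sub-σ-algebras
  have hXm1 : Measurable[mPair X U] X :=
    measurable_fst.comp (measurable_iff_comap_le.mpr le_rfl)
  have hWm2 : Measurable[mPair W X] W :=
    measurable_fst.comp (measurable_iff_comap_le.mpr le_rfl)
  have hXm2 : Measurable[mPair W X] X :=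
    measurable_snd.comp (measurable_iff_comap_le.mpr le_rfl)
  have hPc1pos : ∀ᵐ ω ∂μ, 0 < condExp (mPair X U) μ I1 ω := by
    filter_upwards [hp1, hp1pos] with ω h1 h2; rwa [h1] at h2
  have hRc1pos : ∀ᵐ ω ∂μ, 0 < condExp (mPair W X) μ I1 ω := by
    filter_upwards [hr1, hr1pos] with ω h1 h2; rwa [h1] at h2
  have hRc0nn : ∀ᵐ ω ∂μ, 0 ≤ condExp (mPair W X) μ I0 ω := by
    have h := condExp_nonneg (m := mPair W X) (μ := μ) (f := I0)
      (Eventually.of_forall fun ω => ind_nonneg s0 ω)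
    filter_upwards [h] with ω hω; exact hω
  have hRmeas0 : Measurable (condExp (mPair W X) μ I0) :=
    (stronglyMeasurable_condExp.mono hm2).measurable
  have hRmeas1 : Measurable (condExp (mPair W X) μ I1) :=
    (stronglyMeasurable_condExp.mono hm2).measurable
  -- integrability of (Rc0/Rc1)·I1 via a Fatou argument
  have hratio_int_μ : Integrable
      (fun ω => condExp (mPair W X) μ I0 ω / condExp (mPair W X) μ I1 ω * I1 ω) μ := by
    refine integrable_ratio_mul_indicator μ hms1 hRmeas0 hRmeas1
      integrable_condExp integrable_condExp hRc0nn hRc1pos ?_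
    intro n
    have hsm : StronglyMeasurable[mPair W X]
        (fun ω => min (condExp (mPair W X) μ I0 ω / condExp (mPair W X) μ I1 ω) (n:ℝ)) := by
      have h0 : Measurable[mPair W X] (condExp (mPair W X) μ I0) :=
        (stronglyMeasurable_condExp (m := mPair W X)).measurable
      have h1 : Measurable[mPair W X] (condExp (mPair W X) μ I1) :=
        (stronglyMeasurable_condExp (m := mPair W X)).measurable
      exact ((h0.div h1).min (@measurable_const ℝ Ω _ (mPair W X) (n:ℝ))).stronglyMeasurable
    have hint : Integrable (fun ω => min (condExp (mPair W X) μ I0 ω /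
        condExp (mPair W X) μ I1 ω) (n:ℝ) * I1 ω) μ := by
      refine (integrable_const (n:ℝ)).mono'
        (((hRmeas0.div hRmeas1).min measurable_const).mul hI1m).aestronglyMeasurable ?_
      filter_upwards [hRc0nn, hRc1pos] with ω h0 h1
      rw [Real.norm_eq_abs, abs_mul, abs_of_nonneg (le_min (div_nonneg h0 h1.le)
        (Nat.cast_nonneg n)), abs_of_nonneg (ind_nonneg _ _)]
      calc _ ≤ (n:ℝ) * 1 := mul_le_mul (min_le_right _ _) (ind_le_one _ _)
            (ind_nonneg _ _) (Nat.cast_nonneg n)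
        _ = (n:ℝ) := mul_one _
    exact integral_mul_condexp hm2 μ hsm hint hI1int
  have hr01μ : Integrable (fun ω => r0 ω / r1 ω * I1 ω) μ := by
    refine hratio_int_μ.congr ?_
    filter_upwards [hr0, hr1] with ω h0 h1
    rw [h0, h1]
  have hr01ν : Integrable (fun ω => r0 ω / r1 ω) ν := cond_int_from _ hr01μ
  -- bounded ψ∘W facts, used at several places
  have hψWb : ∀ (Bw : Set 𝓦) (π : Measure Ω), IsFiniteMeasure π → True := fun _ _ _ => trivial
  -- the rectangle identity
  have rect : ∀ (Bw : Set 𝓦) (Bx : Set 𝓧), MeasurableSet Bw → MeasurableSet Bx →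
      ∫ ω, Set.indicator (Bw ×ˢ Bx) (fun _ => (1:ℝ)) (W ω, X ω) * q (Z ω, X ω) ∂ν
      = ∫ ω, Set.indicator (Bw ×ˢ Bx) (fun _ => (1:ℝ)) (W ω, X ω) * (r0 ω / r1 ω) ∂ν := by
    intro Bw Bx hBw hBx
    set ψ : 𝓦 → ℝ := Set.indicator Bw (fun _ => (1:ℝ)) with hψdef
    set χ : 𝓧 → ℝ := Set.indicator Bx (fun _ => (1:ℝ)) with hχdef
    have hψm : Measurable ψ := measurable_const.indicator hBw
    have hχm : Measurable χ := measurable_const.indicator hBx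
    have hψb : ∀ b, ‖ψ b‖ ≤ 1 := fun b => ind_norm_le Bw b
    have hχb : ∀ b, ‖χ b‖ ≤ 1 := fun b => ind_norm_le Bx b
    have hψabs : ∀ b, |ψ b| ≤ 1 := fun b => ind_abs_le Bw b
    have hsplitB : ∀ ω, Set.indicator (Bw ×ˢ Bx) (fun _ => (1:ℝ)) (W ω, X ω)
        = ψ (W ω) * χ (X ω) := by
      intro ω
      by_cases h1 : W ω ∈ Bw <;> by_cases h2 : X ω ∈ Bx <;>
        simp [hψdef, hχdef, Set.indicator_apply, Set.mem_prod, h1, h2]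
    -- integrability of ψ∘W
    have hψWint : Integrable (fun ω => ψ (W ω)) ν :=
      integrable_of_bounded ((hψm.comp hW).aestronglyMeasurable) (fun ω => hψb (W ω))
    have hψWintμ : Integrable (fun ω => ψ (W ω)) μ :=
      integrable_of_bounded ((hψm.comp hW).aestronglyMeasurable) (fun ω => hψb (W ω))
    -- bound on conditional expectations of ψ∘W
    have hcondb : ∀ (π : Measure Ω), IsProbabilityMeasure π →
        Integrable (fun ω => ψ (W ω)) π →
        (∀ᵐ ω ∂π, ‖condExp (mPair X U) π (fun ω' => ψ (W ω')) ω‖ ≤ 1) := by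
      intro π hπ hint
      have h_nn : 0 ≤ᵐ[π] condExp (mPair X U) π (fun ω' => ψ (W ω')) :=
        condExp_nonneg (Eventually.of_forall fun ω => ind_nonneg Bw (W ω))
      have h_le1 : condExp (mPair X U) π (fun ω' => ψ (W ω')) ≤ᵐ[π] fun _ => (1:ℝ) := by
        have h := condExp_mono (m := mPair X U) hint (integrable_const (1:ℝ))
          (Eventually.of_forall fun ω => ind_le_one Bw (W ω))
        rwa [condExp_const hm1 (1:ℝ)] at h
      filter_upwards [h_nn, h_le1] with ω h0 h1
      have h0' : (0:ℝ) ≤ condExp (mPair X U) π (fun ω' => ψ (W ω')) ω := h0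
      rw [Real.norm_eq_abs, abs_le]
      exact ⟨le_trans (by norm_num) h0', h1⟩
    have hb_h : ∀ᵐ ω ∂ν, ‖condExp (mPair X U) ν (fun ω' => ψ (W ω')) ω‖ ≤ 1 :=
      hcondb ν hνprob hψWint
    have hb_kk : ∀ᵐ ω ∂μ, ‖condExp (mPair X U) μ (fun ω' => ψ (W ω')) ω‖ ≤ 1 :=
      hcondb μ inferInstance hψWintμ
    -- m1-measurability of χ∘X
    have hχXm1 : Measurable[mPair X U] (fun ω => χ (X ω)) := hχm.comp hXm1
    have hχXsm : StronglyMeasurable[mPair X U] (fun ω => χ (X ω)) := hχXm1.stronglyMeasurable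
    -- inner rectangle identity from hZW
    have irect : ∀ (Cz : Set 𝓩) (Cx : Set 𝓧), MeasurableSet Cz → MeasurableSet Cx →
        ∫ ω, Set.indicator (Cz ×ˢ Cx) (fun _ => (1:ℝ)) (Z ω, X ω) * ψ (W ω) ∂ν
        = ∫ ω, Set.indicator (Cz ×ˢ Cx) (fun _ => (1:ℝ)) (Z ω, X ω)
            * condExp (mPair X U) ν (fun ω' => ψ (W ω')) ω ∂ν := by
      intro Cz Cx hCz hCx
      set φz : 𝓩 → ℝ := Set.indicator Cz (fun _ => (1:ℝ)) with hφzdef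
      set χx : 𝓧 → ℝ := Set.indicator Cx (fun _ => (1:ℝ)) with hχxdef
      have hφzm : Measurable φz := measurable_const.indicator hCz
      have hχxm : Measurable χx := measurable_const.indicator hCx
      have hsplit : ∀ ω, Set.indicator (Cz ×ˢ Cx) (fun _ => (1:ℝ)) (Z ω, X ω)
          = φz (Z ω) * χx (X ω) := by
        intro ω
        by_cases h1 : Z ω ∈ Cz <;> by_cases h2 : X ω ∈ Cx <;>
          simp [hφzdef, hχxdef, Set.indicator_apply, Set.mem_prod, h1, h2]
      have hχxXsm : StronglyMeasurable[mPair X U] (fun ω => χx (X ω)) :=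
        (hχxm.comp hXm1).stronglyMeasurable
      have hmeas_h : Measurable (condExp (mPair X U) ν (fun ω' => ψ (W ω'))) :=
        (stronglyMeasurable_condExp.mono hm1).measurable
      have int1 : Integrable (fun ω => χx (X ω) * (φz (Z ω) * ψ (W ω))) ν :=
        integrable_of_bounded (((hχxm.comp hX).mul ((hφzm.comp hZ).mul
          (hψm.comp hW))).aestronglyMeasurable)
          (fun ω => norm_mul_le_one (ind_norm_le Cx (X ω))
            (norm_mul_le_one (ind_norm_le Cz (Z ω)) (hψb (W ω))))
      have int2 : Integrable (fun ω => φz (Z ω) * ψ (W ω)) ν :=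
        integrable_of_bounded (((hφzm.comp hZ).mul (hψm.comp hW)).aestronglyMeasurable)
          (fun ω => norm_mul_le_one (ind_norm_le Cz (Z ω)) (hψb (W ω)))
      have int3 : Integrable (fun ω => φz (Z ω)) ν :=
        integrable_of_bounded ((hφzm.comp hZ).aestronglyMeasurable)
          (fun ω => ind_norm_le Cz (Z ω))
      have hcint : Integrable (condExp (mPair X U) ν (fun ω' => ψ (W ω'))) ν :=
        integrable_condExp
      have int4 : Integrable (fun ω => (χx (X ω)
          * condExp (mPair X U) ν (fun ω' => ψ (W ω')) ω) * φz (Z ω)) ν := by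
        refine hcint.norm.mono' (((hχxm.comp hX).mul hmeas_h).mul
          (hφzm.comp hZ)).aestronglyMeasurable ?_
        refine Eventually.of_forall fun ω => ?_
        exact norm_mul_mul_le_mid (ind_norm_le Cx (X ω)) (ind_norm_le Cz (Z ω))
      have t2 := integral_mul_condexp hm1 ν hχxXsm int1 int2
      have t5 := integral_mul_condexp hm1 ν (hχxXsm.mul stronglyMeasurable_condExp) int4 int3
      have t3 : ∫ ω, χx (X ω) * (condExp (mPair X U) ν
            (fun ω' => φz (Z ω') * ψ (W ω'))) ω ∂ν
          = ∫ ω, χx (X ω) * ((condExp (mPair X U) ν (fun ω' => φz (Z ω'))) ω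
            * (condExp (mPair X U) ν (fun ω' => ψ (W ω'))) ω) ∂ν := by
        refine integral_congr_ae ?_
        filter_upwards [hZW φz ψ hφzm hψm (fun b => ind_abs_le Cz b) hψabs] with ω e
        rw [e]
      calc ∫ ω, Set.indicator (Cz ×ˢ Cx) (fun _ => (1:ℝ)) (Z ω, X ω) * ψ (W ω) ∂ν
          = ∫ ω, χx (X ω) * (φz (Z ω) * ψ (W ω)) ∂ν := by
            refine integral_congr_ae (Eventually.of_forall fun ω => ?_)
            simp only [hsplit]; ring
        _ = ∫ ω, χx (X ω) * (condExp (mPair X U) ν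
              (fun ω' => φz (Z ω') * ψ (W ω'))) ω ∂ν := t2
        _ = ∫ ω, χx (X ω) * ((condExp (mPair X U) ν (fun ω' => φz (Z ω'))) ω
              * (condExp (mPair X U) ν (fun ω' => ψ (W ω'))) ω) ∂ν := t3
        _ = ∫ ω, (χx (X ω) * condExp (mPair X U) ν (fun ω' => ψ (W ω')) ω)
              * (condExp (mPair X U) ν (fun ω' => φz (Z ω'))) ω ∂ν := by
            refine integral_congr_ae (Eventually.of_forall fun ω => ?_)
            ring
        _ = ∫ ω, (χx (X ω) * condExp (mPair X U) ν (fun ω' => ψ (W ω')) ω)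
              * φz (Z ω) ∂ν := t5.symm
        _ = ∫ ω, Set.indicator (Cz ×ˢ Cx) (fun _ => (1:ℝ)) (Z ω, X ω)
              * condExp (mPair X U) ν (fun ω' => ψ (W ω')) ω ∂ν := by
            refine integral_congr_ae (Eventually.of_forall fun ω => ?_)
            simp only [hsplit]; ring
    -- π-λ over sets of 𝓩 × 𝓧
    have inner : ∀ ⦃t : Set (𝓩 × 𝓧)⦄, MeasurableSet t →
        ∫ ω, Set.indicator t (fun _ => (1:ℝ)) (Z ω, X ω) * ψ (W ω) ∂ν
        = ∫ ω, Set.indicator t (fun _ => (1:ℝ)) (Z ω, X ω)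
            * condExp (mPair X U) ν (fun ω' => ψ (W ω')) ω ∂ν := by
      refine ext_from_pi ν (hZ.prodMk hX) hψWint integrable_condExp
        generateFrom_prod.symm isPiSystem_prod ?_ ?_
      · exact integral_condExp (m := mPair X U) (μ := ν) (f := fun ω' => ψ (W ω')) hm1
          |>.symm
      · rintro t ⟨Cz, hCz, Cx, hCx, rfl⟩
        exact irect Cz Cx hCz hCx
    -- Step A : insert the ν-conditional expectation of ψ∘W
    have hfχint : Integrable (fun ω => q (Z ω, X ω) * χ (X ω)) ν := by
      refine hqint.norm.mono' ((hq.comp (hZ.prodMk hX)).mul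
        ((hχm.comp hX))).aestronglyMeasurable ?_
      refine Eventually.of_forall fun ω => ?_
      rw [norm_mul]
      exact mul_le_of_le_one_right (norm_nonneg _) (hχb (X ω))
    have stepA : ∫ ω, (q (Z ω, X ω) * χ (X ω)) * ψ (W ω) ∂ν
        = ∫ ω, (q (Z ω, X ω) * χ (X ω))
            * condExp (mPair X U) ν (fun ω' => ψ (W ω')) ω ∂ν :=
      ext_L1 ν (hZ.prodMk hX) hψWint integrable_condExp
        (Eventually.of_forall fun ω => hψb (W ω)) hb_h inner
        (hq.mul (hχm.comp measurable_snd)) hfχint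
    -- Step B : replace q by p0/p1 using hstar
    have hmeas_hν : Measurable (condExp (mPair X U) ν (fun ω' => ψ (W ω'))) :=
      (stronglyMeasurable_condExp.mono hm1).measurable
    have intBq : Integrable (fun ω => (χ (X ω)
        * condExp (mPair X U) ν (fun ω' => ψ (W ω')) ω) * q (Z ω, X ω)) ν := by
      refine hqint.norm.mono' (((hχm.comp hX).mul hmeas_hν).mul
        (hq.comp (hZ.prodMk hX))).aestronglyMeasurable ?_
      filter_upwards [hb_h] with ω hb
      exact norm_mul_mul_le_right (hχb (X ω)) hb
    have eB := integral_mul_condexp hm1 ν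
      (hχXsm.mul stronglyMeasurable_condExp) intBq hqint
    have stepB : ∫ ω, (q (Z ω, X ω) * χ (X ω))
          * condExp (mPair X U) ν (fun ω' => ψ (W ω')) ω ∂ν
        = ∫ ω, (p0 ω / p1 ω * χ (X ω))
          * condExp (mPair X U) ν (fun ω' => ψ (W ω')) ω ∂ν := by
      calc ∫ ω, (q (Z ω, X ω) * χ (X ω))
            * condExp (mPair X U) ν (fun ω' => ψ (W ω')) ω ∂ν
          = ∫ ω, (χ (X ω) * condExp (mPair X U) ν (fun ω' => ψ (W ω')) ω)
            * q (Z ω, X ω) ∂ν := by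
            refine integral_congr_ae (Eventually.of_forall fun ω => ?_); ring
        _ = ∫ ω, (χ (X ω) * condExp (mPair X U) ν (fun ω' => ψ (W ω')) ω)
            * condExp (mPair X U) ν (fun ω' => q (Z ω', X ω')) ω ∂ν := eB
        _ = ∫ ω, (χ (X ω) * condExp (mPair X U) ν (fun ω' => ψ (W ω')) ω)
            * (p0 ω / p1 ω) ∂ν := by
            refine integral_congr_ae ?_
            filter_upwards [hstar] with ω e
            rw [e]
        _ = ∫ ω, (p0 ω / p1 ω * χ (X ω))
            * condExp (mPair X U) ν (fun ω' => ψ (W ω')) ω ∂ν := by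
            refine integral_congr_ae (Eventually.of_forall fun ω => ?_); ring
    -- Step C' : remove the conditional expectation again
    have hcintq : Integrable (condExp (mPair X U) ν (fun ω' => q (Z ω', X ω'))) ν :=
      integrable_condExp
    have intC : Integrable (fun ω => (condExp (mPair X U) ν (fun ω' => q (Z ω', X ω')) ω
        * χ (X ω)) * ψ (W ω)) ν := by
      refine hcintq.norm.mono' ((((stronglyMeasurable_condExp.mono
        hm1).measurable).mul (hχm.comp hX)).mul (hψm.comp hW)).aestronglyMeasurable ?_
      refine Eventually.of_forall fun ω => ?_
      exact norm_mul_mul_le_left (hχb (X ω)) (hψb (W ω))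
    have eC := integral_mul_condexp hm1 ν
      (stronglyMeasurable_condExp.mul hχXsm) intC hψWint
    have stepC : ∫ ω, (p0 ω / p1 ω * χ (X ω))
          * condExp (mPair X U) ν (fun ω' => ψ (W ω')) ω ∂ν
        = ∫ ω, (p0 ω / p1 ω * χ (X ω)) * ψ (W ω) ∂ν := by
      calc ∫ ω, (p0 ω / p1 ω * χ (X ω))
            * condExp (mPair X U) ν (fun ω' => ψ (W ω')) ω ∂ν
          = ∫ ω, (condExp (mPair X U) ν (fun ω' => q (Z ω', X ω')) ω * χ (X ω))
            * condExp (mPair X U) ν (fun ω' => ψ (W ω')) ω ∂ν := by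
            refine integral_congr_ae ?_
            filter_upwards [hstar] with ω e
            rw [e]
        _ = ∫ ω, (condExp (mPair X U) ν (fun ω' => q (Z ω', X ω')) ω * χ (X ω))
            * ψ (W ω) ∂ν := eC.symm
        _ = ∫ ω, (p0 ω / p1 ω * χ (X ω)) * ψ (W ω) ∂ν := by
            refine integral_congr_ae ?_
            filter_upwards [hstar] with ω e
            rw [e]
    -- Step Cμ : use the conditional independence W ⟂ S | (X,U) under μ
    have hψs1m : Measurable (Set.indicator ({(1:ℝ)} : Set ℝ) (fun _ => (1:ℝ))) :=
      measurable_const.indicator (measurableSet_singleton 1)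
    have hψs0m : Measurable (Set.indicator ({(0:ℝ)} : Set ℝ) (fun _ => (1:ℝ))) :=
      measurable_const.indicator (measurableSet_singleton 0)
    have hc1 : (fun ω => ψ (W ω) * Set.indicator ({(1:ℝ)} : Set ℝ) (fun _ => (1:ℝ)) (S ω))
        = fun ω => ψ (W ω) * I1 ω := by
      funext ω
      by_cases hω : S ω = 1 <;> simp [Set.indicator_apply, hω, hI1def, hs1def]
    have hc1' : (fun ω => Set.indicator ({(1:ℝ)} : Set ℝ) (fun _ => (1:ℝ)) (S ω)) = I1 := by
      funext ω
      by_cases hω : S ω = 1 <;> simp [Set.indicator_apply, hω, hI1def, hs1def]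
    have hc0 : (fun ω => ψ (W ω) * Set.indicator ({(0:ℝ)} : Set ℝ) (fun _ => (1:ℝ)) (S ω))
        = fun ω => ψ (W ω) * I0 ω := by
      funext ω
      by_cases hω : S ω = 0 <;> simp [Set.indicator_apply, hω, hI0def, hs0def]
    have hc0' : (fun ω => Set.indicator ({(0:ℝ)} : Set ℝ) (fun _ => (1:ℝ)) (S ω)) = I0 := by
      funext ω
      by_cases hω : S ω = 0 <;> simp [Set.indicator_apply, hω, hI0def, hs0def]
    have hWS1 : condExp (mPair X U) μ (fun ω => ψ (W ω) * I1 ω) =ᵐ[μ]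
        fun ω => condExp (mPair X U) μ (fun ω' => ψ (W ω')) ω
          * condExp (mPair X U) μ I1 ω := by
      have hk := hWS ψ (Set.indicator ({(1:ℝ)} : Set ℝ) (fun _ => (1:ℝ))) hψm hψs1m
        hψabs (fun b => ind_abs_le _ b)
      rw [hc1, hc1'] at hk
      exact hk
    have hWS0 : condExp (mPair X U) μ (fun ω => ψ (W ω) * I0 ω) =ᵐ[μ]
        fun ω => condExp (mPair X U) μ (fun ω' => ψ (W ω')) ω
          * condExp (mPair X U) μ I0 ω := by
      have hk := hWS ψ (Set.indicator ({(0:ℝ)} : Set ℝ) (fun _ => (1:ℝ))) hψm hψs0m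
        hψabs (fun b => ind_abs_le _ b)
      rw [hc0, hc0'] at hk
      exact hk
    have hPc0m1 : Measurable[mPair X U] (condExp (mPair X U) μ I0) :=
      stronglyMeasurable_condExp.measurable
    have hPc1m1 : Measurable[mPair X U] (condExp (mPair X U) μ I1) :=
      stronglyMeasurable_condExp.measurable
    have hPc0meas : Measurable (condExp (mPair X U) μ I0) :=
      (stronglyMeasurable_condExp.mono hm1).measurable
    have hPc1meas : Measurable (condExp (mPair X U) μ I1) :=
      (stronglyMeasurable_condExp.mono hm1).measurable
    have FFsm : StronglyMeasurable[mPair X U]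
        (fun ω => condExp (mPair X U) μ I0 ω / condExp (mPair X U) μ I1 ω * χ (X ω)) :=
      ((hPc0m1.div hPc1m1).mul hχXm1).stronglyMeasurable
    have intψI1 : Integrable (fun ω => ψ (W ω) * I1 ω) μ :=
      integrable_of_bounded ((hψm.comp hW).mul hI1m).aestronglyMeasurable
        (fun ω => norm_mul_le_one (hψb (W ω)) (ind_norm_le s1 ω))
    have intψI0 : Integrable (fun ω => ψ (W ω) * I0 ω) μ :=
      integrable_of_bounded ((hψm.comp hW).mul hI0m).aestronglyMeasurable
        (fun ω => norm_mul_le_one (hψb (W ω)) (ind_norm_le s0 ω))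
    have intχψI0 : Integrable (fun ω => χ (X ω) * (ψ (W ω) * I0 ω)) μ :=
      integrable_of_bounded ((hχm.comp hX).mul
        ((hψm.comp hW).mul hI0m)).aestronglyMeasurable
        (fun ω => norm_mul_le_one (hχb (X ω))
          (norm_mul_le_one (hψb (W ω)) (ind_norm_le s0 ω)))
    have intFF : Integrable (fun ω => (condExp (mPair X U) μ I0 ω
        / condExp (mPair X U) μ I1 ω * χ (X ω)) * (ψ (W ω) * I1 ω)) μ := by
      refine hp01μ.norm.mono' ((((hPc0meas.div hPc1meas).mul (hχm.comp hX)).mul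
        ((hψm.comp hW).mul hI1m)).aestronglyMeasurable) ?_
      filter_upwards [hp0, hp1] with ω e0 e1
      rw [← e0, ← e1]
      exact norm_helper3 (hχb (X ω)) (hψb (W ω))
    have eCmu1 := integral_mul_condexp hm1 μ FFsm intFF intψI1
    have eCmu2 := integral_mul_condexp hm1 μ hχXsm intχψI0 intψI0
    have stepCmu : ∫ ω, ((p0 ω / p1 ω * χ (X ω)) * ψ (W ω)) * I1 ω ∂μ
        = ∫ ω, χ (X ω) * (ψ (W ω) * I0 ω) ∂μ := by
      calc ∫ ω, ((p0 ω / p1 ω * χ (X ω)) * ψ (W ω)) * I1 ω ∂μ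
          = ∫ ω, (condExp (mPair X U) μ I0 ω / condExp (mPair X U) μ I1 ω * χ (X ω))
              * (ψ (W ω) * I1 ω) ∂μ := by
            refine integral_congr_ae ?_
            filter_upwards [hp0, hp1] with ω e0 e1
            rw [e0, e1]; ring
        _ = ∫ ω, (condExp (mPair X U) μ I0 ω / condExp (mPair X U) μ I1 ω * χ (X ω))
              * condExp (mPair X U) μ (fun ω' => ψ (W ω') * I1 ω') ω ∂μ := eCmu1
        _ = ∫ ω, (condExp (mPair X U) μ I0 ω / condExp (mPair X U) μ I1 ω * χ (X ω))
              * (condExp (mPair X U) μ (fun ω' => ψ (W ω')) ω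
                * condExp (mPair X U) μ I1 ω) ∂μ := by
            refine integral_congr_ae ?_
            filter_upwards [hWS1] with ω e
            rw [e]
        _ = ∫ ω, χ (X ω) * (condExp (mPair X U) μ (fun ω' => ψ (W ω')) ω
                * condExp (mPair X U) μ I0 ω) ∂μ := by
            refine integral_congr_ae ?_
            filter_upwards [hPc1pos] with ω hpos
            exact cancel_helper hpos.ne'
        _ = ∫ ω, χ (X ω) * condExp (mPair X U) μ (fun ω' => ψ (W ω') * I0 ω') ω ∂μ := by
            refine integral_congr_ae ?_
            filter_upwards [hWS0] with ω e
            rw [e]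
        _ = ∫ ω, χ (X ω) * (ψ (W ω) * I0 ω) ∂μ := eCmu2.symm
    -- Step Dμ : rewrite in terms of the conditional probabilities given (W,X)
    have hRc0m2 : Measurable[mPair W X] (condExp (mPair W X) μ I0) :=
      stronglyMeasurable_condExp.measurable
    have hRc1m2 : Measurable[mPair W X] (condExp (mPair W X) μ I1) :=
      stronglyMeasurable_condExp.measurable
    have hψWm2 : Measurable[mPair W X] (fun ω => ψ (W ω)) := hψm.comp hWm2
    have hχXm2 : Measurable[mPair W X] (fun ω => χ (X ω)) := hχm.comp hXm2
    have HBsm : StronglyMeasurable[mPair W X] (fun ω => ψ (W ω) * χ (X ω)) :=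
      (hψWm2.mul hχXm2).stronglyMeasurable
    have intHBI0 : Integrable (fun ω => (ψ (W ω) * χ (X ω)) * I0 ω) μ :=
      integrable_of_bounded (((hψm.comp hW).mul (hχm.comp hX)).mul
        hI0m).aestronglyMeasurable
        (fun ω => norm_mul_le_one (norm_mul_le_one (hψb (W ω)) (hχb (X ω)))
          (ind_norm_le s0 ω))
    have eD4 := integral_mul_condexp hm2 μ HBsm intHBI0 hI0int
    have DRsm : StronglyMeasurable[mPair W X] (fun ω => condExp (mPair W X) μ I0 ω
        / condExp (mPair W X) μ I1 ω * (ψ (W ω) * χ (X ω))) :=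
      ((hRc0m2.div hRc1m2).mul (hψWm2.mul hχXm2)).stronglyMeasurable
    have intDR : Integrable (fun ω => (condExp (mPair W X) μ I0 ω
        / condExp (mPair W X) μ I1 ω * (ψ (W ω) * χ (X ω))) * I1 ω) μ := by
      refine hratio_int_μ.norm.mono' (((hRmeas0.div hRmeas1).mul
        ((hψm.comp hW).mul (hχm.comp hX))).mul hI1m).aestronglyMeasurable ?_
      refine Eventually.of_forall fun ω => ?_
      exact norm_helper4 (hψb (W ω)) (hχb (X ω))
    have eD2 := integral_mul_condexp hm2 μ DRsm intDR hI1int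
    have stepDmu : ∫ ω, χ (X ω) * (ψ (W ω) * I0 ω) ∂μ
        = ∫ ω, ((r0 ω / r1 ω * χ (X ω)) * ψ (W ω)) * I1 ω ∂μ := by
      calc ∫ ω, χ (X ω) * (ψ (W ω) * I0 ω) ∂μ
          = ∫ ω, (ψ (W ω) * χ (X ω)) * I0 ω ∂μ := by
            refine integral_congr_ae (Eventually.of_forall fun ω => ?_); ring
        _ = ∫ ω, (ψ (W ω) * χ (X ω)) * condExp (mPair W X) μ I0 ω ∂μ := eD4
        _ = ∫ ω, (condExp (mPair W X) μ I0 ω / condExp (mPair W X) μ I1 ω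
              * (ψ (W ω) * χ (X ω))) * condExp (mPair W X) μ I1 ω ∂μ := by
            refine integral_congr_ae ?_
            filter_upwards [hRc1pos] with ω hpos
            exact cancel_helper2 hpos.ne'
        _ = ∫ ω, (condExp (mPair W X) μ I0 ω / condExp (mPair W X) μ I1 ω
              * (ψ (W ω) * χ (X ω))) * I1 ω ∂μ := eD2.symm
        _ = ∫ ω, ((r0 ω / r1 ω * χ (X ω)) * ψ (W ω)) * I1 ω ∂μ := by
            refine integral_congr_ae ?_
            filter_upwards [hr0, hr1] with ω e0 e1
            rw [e0, e1]; ring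
    -- assemble the rectangle identity
    calc ∫ ω, Set.indicator (Bw ×ˢ Bx) (fun _ => (1:ℝ)) (W ω, X ω) * q (Z ω, X ω) ∂ν
        = ∫ ω, (q (Z ω, X ω) * χ (X ω)) * ψ (W ω) ∂ν := by
          refine integral_congr_ae (Eventually.of_forall fun ω => ?_)
          simp only [hsplitB]; ring
      _ = ∫ ω, (q (Z ω, X ω) * χ (X ω))
            * condExp (mPair X U) ν (fun ω' => ψ (W ω')) ω ∂ν := stepA
      _ = ∫ ω, (p0 ω / p1 ω * χ (X ω))
            * condExp (mPair X U) ν (fun ω' => ψ (W ω')) ω ∂ν := stepB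
      _ = ∫ ω, (p0 ω / p1 ω * χ (X ω)) * ψ (W ω) ∂ν := stepC
      _ = (μ s1).toReal⁻¹ * ∫ ω, ((p0 ω / p1 ω * χ (X ω)) * ψ (W ω)) * I1 ω ∂μ :=
          cond_eq _
      _ = (μ s1).toReal⁻¹ * ∫ ω, χ (X ω) * (ψ (W ω) * I0 ω) ∂μ := by rw [stepCmu]
      _ = (μ s1).toReal⁻¹ * ∫ ω, ((r0 ω / r1 ω * χ (X ω)) * ψ (W ω)) * I1 ω ∂μ := by
          rw [stepDmu]
      _ = ∫ ω, (r0 ω / r1 ω * χ (X ω)) * ψ (W ω) ∂ν := (cond_eq _).symm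
      _ = ∫ ω, Set.indicator (Bw ×ˢ Bx) (fun _ => (1:ℝ)) (W ω, X ω) * (r0 ω / r1 ω) ∂ν := by
          refine integral_congr_ae (Eventually.of_forall fun ω => ?_)
          simp only [hsplitB]; ring
  -- π-λ over product-measurable sets of 𝓦 × 𝓧
  have main : ∀ ⦃t : Set (𝓦 × 𝓧)⦄, MeasurableSet t →
      ∫ ω, Set.indicator t (fun _ => (1:ℝ)) (W ω, X ω) * q (Z ω, X ω) ∂ν
      = ∫ ω, Set.indicator t (fun _ => (1:ℝ)) (W ω, X ω) * (r0 ω / r1 ω) ∂ν := by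
    refine ext_from_pi ν (hW.prodMk hX) hqint hr01ν generateFrom_prod.symm
      isPiSystem_prod ?_ ?_
    · have h := rect Set.univ Set.univ MeasurableSet.univ MeasurableSet.univ
      simpa [Set.univ_prod_univ] using h
    · rintro t ⟨Bw, hBw, Bx, hBx, rfl⟩
      exact rect Bw Bx hBw hBx
  -- conclude by uniqueness of conditional expectation
  have hRc0m2' : Measurable[mPair W X] (condExp (mPair W X) μ I0) :=
    stronglyMeasurable_condExp.measurable
  have hRc1m2' : Measurable[mPair W X] (condExp (mPair W X) μ I1) :=
    stronglyMeasurable_condExp.measurable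
  refine (ae_eq_condExp_of_forall_setIntegral_eq hm2 hqint
    (fun s _ _ => hr01ν.integrableOn) ?_ ?_).symm
  · intro s hs hνs
    obtain ⟨B, hB, rfl⟩ := hs
    have hsm : MeasurableSet ((fun ω => (W ω, X ω)) ⁻¹' B) := (hW.prodMk hX) hB
    rw [← integral_indicator hsm, ← integral_indicator hsm]
    have hindconv : ∀ (g : Ω → ℝ),
        (Set.indicator ((fun ω => (W ω, X ω)) ⁻¹' B) g)
        = fun ω => Set.indicator B (fun _ => (1:ℝ)) (W ω, X ω) * g ω := by
      intro g; funext ω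
      by_cases h : (W ω, X ω) ∈ B <;> simp [Set.indicator_apply, h]
    rw [hindconv, hindconv]
    exact (main hB).symm
  · exact ⟨fun ω => condExp (mPair W X) μ I0 ω / condExp (mPair W X) μ I1 ω,
      (hRc0m2'.div hRc1m2').stronglyMeasurable, by
        filter_upwards [haeν hr0, haeν hr1] with ω e0 e1
        rw [e0, e1]⟩
end
end

section
/- Let S be binary with conditional densities, and suppose W ⟂ S | (X,U) with P(S=1|X,U)>0 and P(S=1|W,X)>0. Then ∫ [P(S=0 | X, u)/P(S=1 | X, u)] · p(u | W, X, S=1) du = P(S=0 | W, X)/P(S=1 | W, X) almost surely. -/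
open MeasureTheory

noncomputable section

/-- Density-ratio averaging identity in the proof of Lemma 1. Fix values `(w, x)`.
With respect to a dominating measure `ν` on the space of `u`-values, let `pU u` be the
density of `U` given `X = x`, let `pW1 u` (resp. `pW0 u`) be the conditional density of
`W` at `w` given `(U = u, X = x, S = 1)` (resp. `S = 0`), and let `π1 u = P(S=1|X=x,U=u)`.
The conditional independence `W ⟂ S | (X,U)` states `pW1 = pW0` (ν-a.e.).
Then, with `D1 ∝ P(S=1, W=w | X=x)` and `D0 ∝ P(S=0, W=w | X=x)`, so that the density of
`U` given `(W=w, X=x, S=1)` is `u ↦ π1 u * pU u * pW1 u / D1` and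
`P(S=0|W=w,X=x)/P(S=1|W=w,X=x) = D0/D1`, we have
`∫ [P(S=0|X,u)/P(S=1|X,u)] p(u|W,X,S=1) dν(u) = P(S=0|W,X)/P(S=1|W,X)`. -/
theorem stmt4 {𝓤 : Type*} [MeasurableSpace 𝓤] (ν : Measure 𝓤)
    (π1 pU pW0 pW1 : 𝓤 → ℝ)
    (hπ1m : Measurable π1) (hpUm : Measurable pU)
    (hpW0m : Measurable pW0) (hpW1m : Measurable pW1)
    (hπ1pos : ∀ u, 0 < π1 u) (hπ1le : ∀ u, π1 u ≤ 1)
    (hpUnn : ∀ u, 0 ≤ pU u) (hpW0nn : ∀ u, 0 ≤ pW0 u) (hpW1nn : ∀ u, 0 ≤ pW1 u)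
    -- conditional independence `W ⟂ S | (X, U)`
    (hCI : pW1 =ᵐ[ν] pW0)
    (hint1 : Integrable (fun u => π1 u * pU u * pW1 u) ν)
    (hint0 : Integrable (fun u => (1 - π1 u) * pU u * pW0 u) ν)
    (D1 D0 : ℝ)
    (hD1 : D1 = ∫ u, π1 u * pU u * pW1 u ∂ν) (hD1pos : 0 < D1)
    (hD0 : D0 = ∫ u, (1 - π1 u) * pU u * pW0 u ∂ν) :
    ∫ u, ((1 - π1 u) / π1 u) * (π1 u * pU u * pW1 u / D1) ∂ν = D0 / D1 := by
  have h : (fun u => ((1 - π1 u) / π1 u) * (π1 u * pU u * pW1 u / D1))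
      =ᵐ[ν] fun u => (1 - π1 u) * pU u * pW0 u / D1 := by
    filter_upwards [hCI] with u hu
    rw [hu]
    field_simp [(hπ1pos u).ne', hD1pos.ne']
  rw [integral_congr_ae h, integral_div, ← hD0]
end
end
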